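/- arXiv:2603.24605 — 6 statements merged into one kernel-verified Lean document; each statement's English description precedes it below -/
import Mathlib

section
/- The directed bid–ask distance d⃗ is nonnegative, satisfies the triangle inequality d⃗(μ,ρ) ≤ d⃗(μ,ν) + d⃗(ν,ρ), and separates points: if d⃗(μ,ν) = d⃗(ν,μ) = 0 then μ = ν. Consequently, the symmetrization d(μ,ν) = (d⃗(μ,ν) + d⃗(ν,μ))/2 is a metric on P₁(ℝ₊). -/
open MeasureTheory Set Filter Topology
open scoped NNReal ENNReal

noncomputable section

/-- Linear growth on the nonnegative half-line. -/
def LinGrowth (f : ℝ → ℝ) : Prop := ∃ C : ℝ, ∀ x ≥ (0:ℝ), |f x| ≤ C * (1 + x)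

/-- A probability measure on ℝ supported on ℝ₊ with finite first moment. -/
def IsP1 (μ : Measure ℝ) : Prop :=
  IsProbabilityMeasure μ ∧ (∀ᵐ x ∂μ, 0 ≤ x) ∧ Integrable id μ

/-- Convex order: integrals of convex linear-growth test functions are ordered. -/
def CvxOrder (μ ν : Measure ℝ) : Prop :=
  ∀ ψ : ℝ → ℝ, ConvexOn ℝ (Ici (0:ℝ)) ψ → LinGrowth ψ →
    ∫ x, ψ x ∂μ ≤ ∫ x, ψ x ∂ν

/-- The directed bid–ask distance. -/
def dirDist (μ ν : Measure ℝ) : ℝ :=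
  sSup {r : ℝ | ∃ ψ : ℝ → ℝ, ConvexOn ℝ (Ici (0:ℝ)) ψ ∧
    LipschitzOnWith 1 ψ (Ici (0:ℝ)) ∧ r = ∫ x, ψ x ∂μ - ∫ x, ψ x ∂ν}

/-- The (symmetrized) bid–ask distance. -/
def baDist (μ ν : Measure ℝ) : ℝ := (dirDist μ ν + dirDist ν μ) / 2

/-- A Lipschitz-on-Ici-0 function is integrable against a P1 measure. -/
lemma integrable_lipOn {μ : Measure ℝ} (hμ : IsP1 μ) {ψ : ℝ → ℝ}
    (hlip : LipschitzOnWith 1 ψ (Ici (0:ℝ))) : Integrable ψ μ := by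
  haveI := hμ.1
  have hm : LipschitzWith 1 (fun x : ℝ => max x 0) := LipschitzWith.id.max_const 0
  have hg : LipschitzWith 1 (fun x : ℝ => ψ (max x 0)) := by
    have := hlip.comp (hm.lipschitzOnWith (s := univ))
      (fun x _ => le_max_right x 0)
    simpa [lipschitzOnWith_univ, Function.comp_def] using this
  have heq : ψ =ᵐ[μ] fun x => ψ (max x 0) := by
    filter_upwards [hμ.2.1] with x hx
    simp [max_eq_left hx]
  have hintg : Integrable (fun x => ψ (max x 0)) μ := by
    refine Integrable.mono' ((integrable_const |ψ 0|).add hμ.2.2.abs)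
      hg.continuous.aestronglyMeasurable ?_
    refine Eventually.of_forall fun x => ?_
    have h0 : max (0:ℝ) 0 = 0 := max_self 0
    calc ‖ψ (max x 0)‖ = |ψ (max x 0)| := rfl
      _ ≤ |ψ 0| + |ψ (max x 0) - ψ 0| := by
          have := abs_sub_abs_le_abs_sub (ψ (max x 0)) (ψ 0)
          linarith [abs_nonneg (ψ (max x 0) - ψ 0)]
      _ ≤ |ψ 0| + |x| := by
          have h2 : |ψ (max x 0) - ψ (max (0:ℝ) 0)| ≤ |x - 0| := by
            have := hg.dist_le_mul x 0
            simpa [Real.dist_eq] using this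
          rw [h0] at h2
          simp only [sub_zero] at h2
          linarith
      _ = |ψ 0| + |id x| := rfl
  exact hintg.congr heq.symm

/-- |∫ψ dμ − ψ 0| ≤ ∫ id dμ. -/
lemma integral_sub_psi_zero_bound {μ : Measure ℝ} (hμ : IsP1 μ) {ψ : ℝ → ℝ}
    (hlip : LipschitzOnWith 1 ψ (Ici (0:ℝ))) :
    |∫ x, ψ x ∂μ - ψ 0| ≤ ∫ x, id x ∂μ := by
  haveI := hμ.1
  have hint := integrable_lipOn hμ hlip
  have h1 : ∫ x, ψ x ∂μ - ψ 0 = ∫ x, (ψ x - ψ 0) ∂μ := by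
    rw [integral_sub hint (integrable_const _), integral_const]
    simp
  rw [h1]
  calc |∫ x, (ψ x - ψ 0) ∂μ| ≤ ∫ x, |ψ x - ψ 0| ∂μ := by
        simpa using norm_integral_le_integral_norm (μ := μ) (fun x => ψ x - ψ 0)
    _ ≤ ∫ x, id x ∂μ := by
        refine integral_mono_ae (hint.sub (integrable_const _)).abs hμ.2.2 ?_
        filter_upwards [hμ.2.1] with x hx
        have := hlip.dist_le_mul x hx 0 (self_mem_Ici)
        simp only [Real.dist_eq, NNReal.coe_one, one_mul, sub_zero] at this
        simpa [abs_of_nonneg hx] using this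

lemma zero_mem_dirSet (μ ν : Measure ℝ) :
    (0:ℝ) ∈ {r : ℝ | ∃ ψ : ℝ → ℝ, ConvexOn ℝ (Ici (0:ℝ)) ψ ∧
      LipschitzOnWith 1 ψ (Ici (0:ℝ)) ∧ r = ∫ x, ψ x ∂μ - ∫ x, ψ x ∂ν} := by
  exact ⟨fun _ => 0, convexOn_const 0 (convex_Ici 0),
    ((LipschitzWith.const 0).weaken (by norm_num)).lipschitzOnWith, by simp⟩

lemma bddAbove_dirSet {μ ν : Measure ℝ} (hμ : IsP1 μ) (hν : IsP1 ν) :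
    BddAbove {r : ℝ | ∃ ψ : ℝ → ℝ, ConvexOn ℝ (Ici (0:ℝ)) ψ ∧
      LipschitzOnWith 1 ψ (Ici (0:ℝ)) ∧ r = ∫ x, ψ x ∂μ - ∫ x, ψ x ∂ν} := by
  refine ⟨(∫ x, id x ∂μ) + ∫ x, id x ∂ν, ?_⟩
  rintro r ⟨ψ, _, hlip, rfl⟩
  have h1 := abs_le.mp (integral_sub_psi_zero_bound hμ hlip)
  have h2 := abs_le.mp (integral_sub_psi_zero_bound hν hlip)
  linarith [h1.2, h2.1]

lemma dirDist_nonneg' {μ ν : Measure ℝ} (hμ : IsP1 μ) (hν : IsP1 ν) :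
    0 ≤ dirDist μ ν :=
  le_csSup (bddAbove_dirSet hμ hν) (zero_mem_dirSet μ ν)

lemma dirDist_triangle' {μ ν ρ : Measure ℝ} (hμ : IsP1 μ) (hν : IsP1 ν) (hρ : IsP1 ρ) :
    dirDist μ ρ ≤ dirDist μ ν + dirDist ν ρ := by
  refine csSup_le ⟨0, zero_mem_dirSet μ ρ⟩ ?_
  rintro r ⟨ψ, hc, hlip, rfl⟩
  have h1 : ∫ x, ψ x ∂μ - ∫ x, ψ x ∂ν ≤ dirDist μ ν :=
    le_csSup (bddAbove_dirSet hμ hν) ⟨ψ, hc, hlip, rfl⟩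
  have h2 : ∫ x, ψ x ∂ν - ∫ x, ψ x ∂ρ ≤ dirDist ν ρ :=
    le_csSup (bddAbove_dirSet hν hρ) ⟨ψ, hc, hlip, rfl⟩
  linarith

lemma dirDist_self (μ : Measure ℝ) : dirDist μ μ = 0 := by
  have : {r : ℝ | ∃ ψ : ℝ → ℝ, ConvexOn ℝ (Ici (0:ℝ)) ψ ∧
      LipschitzOnWith 1 ψ (Ici (0:ℝ)) ∧ r = ∫ x, ψ x ∂μ - ∫ x, ψ x ∂μ} = {0} := by
    ext r
    constructor
    · rintro ⟨ψ, _, _, rfl⟩; simp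
    · rintro rfl; exact zero_mem_dirSet μ μ
  rw [dirDist, this, csSup_singleton]

lemma call_convex (t : ℝ) : ConvexOn ℝ (Ici (0:ℝ)) (fun x => max (x - t) 0) :=
  ((convexOn_id (convex_Ici 0)).sub (concaveOn_const t (convex_Ici 0))).sup
    (convexOn_const 0 (convex_Ici 0))

lemma call_lip (t : ℝ) : LipschitzOnWith 1 (fun x : ℝ => max (x - t) 0) (Ici (0:ℝ)) := by
  have : LipschitzWith 1 (fun x : ℝ => max (x - t) 0) := by
    have h1 : LipschitzWith 1 (fun x : ℝ => x - t) :=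
      LipschitzWith.of_dist_le_mul (fun x y => by simp [Real.dist_eq])
    exact h1.max_const 0
  exact this.lipschitzOnWith

lemma call_diff_bound (a h : ℝ) (hh : 0 ≤ h) :
    0 ≤ max a 0 - max (a - h) 0 ∧ max a 0 - max (a - h) 0 ≤ h := by
  constructor
  · have : max (a - h) 0 ≤ max a 0 := max_le_max (by linarith) le_rfl
    linarith
  · have h1 : a ≤ max (a - h) 0 + h := by
      have := le_max_left (a - h) 0; linarith
    have h2 : (0:ℝ) ≤ max (a - h) 0 + h := by
      have := le_max_right (a - h) 0; linarith
    have := max_le h1 h2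
    linarith

/-- If call prices agree for all strikes, tails agree. -/
lemma tail_eq_of_calls {μ ν : Measure ℝ} [IsProbabilityMeasure μ] [IsProbabilityMeasure ν]
    (hμi : ∀ t : ℝ, Integrable (fun x => max (x - t) 0) μ)
    (hνi : ∀ t : ℝ, Integrable (fun x => max (x - t) 0) ν)
    (hcall : ∀ t : ℝ, ∫ x, max (x - t) 0 ∂μ = ∫ x, max (x - t) 0 ∂ν)
    (t : ℝ) : μ (Ioi t) = ν (Ioi t) := by
  set F : ℕ → ℝ → ℝ := fun n x =>
    (n + 1 : ℝ) * (max (x - t) 0 - max (x - t - 1 / (n + 1)) 0) with hF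
  have hpos : ∀ n : ℕ, (0:ℝ) < 1 / (n + 1 : ℝ) := fun n => by positivity
  have hbound : ∀ n, ∀ x : ℝ, ‖F n x‖ ≤ 1 := by
    intro n x
    obtain ⟨h0, h1⟩ := call_diff_bound (x - t) (1 / (n + 1 : ℝ)) (hpos n).le
    have hn : (0:ℝ) < (n + 1 : ℝ) := by positivity
    rw [Real.norm_eq_abs, hF]
    have : max (x - t) 0 - max (x - t - 1 / (n + 1)) 0 ≤ 1 / (n+1) := h1
    rw [abs_of_nonneg (by positivity)]
    calc (n + 1 : ℝ) * (max (x - t) 0 - max (x - t - 1 / (n + 1)) 0)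
        ≤ (n + 1 : ℝ) * (1 / (n + 1)) := by
          exact mul_le_mul_of_nonneg_left this hn.le
      _ = 1 := by field_simp
  have hlim : ∀ x : ℝ, Tendsto (fun n => F n x) atTop
      (𝓝 ((Ioi t).indicator (fun _ => (1:ℝ)) x)) := by
    intro x
    rcases le_or_gt x t with hx | hx
    · have : ∀ n, F n x = 0 := by
        intro n
        have h1 : max (x - t) 0 = 0 := max_eq_right (by linarith)
        have h2 : max (x - t - 1 / (n + 1 : ℝ)) 0 = 0 :=
          max_eq_right (by linarith [(hpos n).le])
        simp only [hF, h1, h2, sub_zero, sub_self, mul_zero]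
      rw [indicator_of_notMem (by simpa using hx : x ∉ Ioi t)]
      exact Tendsto.congr (fun n => (this n).symm) tendsto_const_nhds
    · have hev : ∀ᶠ n : ℕ in atTop, F n x = 1 := by
        have htend : Tendsto (fun n : ℕ => 1 / (n + 1 : ℝ)) atTop (𝓝 0) :=
          tendsto_one_div_add_atTop_nhds_zero_nat
        filter_upwards [htend.eventually_lt_const (by linarith : (0:ℝ) < x - t)] with n hn
        have h1 : max (x - t) 0 = x - t := max_eq_left (by linarith)
        have h2 : max (x - t - 1 / (n + 1 : ℝ)) 0 = x - t - 1 / (n+1) :=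
          max_eq_left (by linarith)
        have hn1 : (n + 1 : ℝ) ≠ 0 := by positivity
        rw [hF]; simp only [h1, h2]
        field_simp
        ring
      rw [indicator_of_mem (by simpa using hx : x ∈ Ioi t)]
      exact Tendsto.congr' (hev.mono fun n hn => hn.symm) tendsto_const_nhds
  have key : ∀ (κ : Measure ℝ), IsProbabilityMeasure κ →
      (∀ t : ℝ, Integrable (fun x => max (x - t) 0) κ) →
      Tendsto (fun n => ∫ x, F n x ∂κ) atTop (𝓝 ((κ (Ioi t)).toReal)) := by
    intro κ hκ hκi
    haveI := hκ
    have h := tendsto_integral_of_dominated_convergence (μ := κ)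
      (F := F) (f := (Ioi t).indicator (fun _ => (1:ℝ))) (bound := fun _ => 1)
      (fun n => (Continuous.aestronglyMeasurable (by
        apply Continuous.mul continuous_const
        apply Continuous.sub
        · exact (continuous_id.sub continuous_const).max continuous_const
        · exact ((continuous_id.sub continuous_const).sub continuous_const).max
            continuous_const)))
      (integrable_const 1)
      (fun n => Eventually.of_forall (hbound n))
      (Eventually.of_forall hlim)
    have : ∫ x, (Ioi t).indicator (fun _ => (1:ℝ)) x ∂κ = (κ (Ioi t)).toReal := by
      rw [integral_indicator_const (1:ℝ) measurableSet_Ioi]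
      simp [measureReal_def]
    rwa [this] at h
  have hFeq : ∀ n, ∫ x, F n x ∂μ = ∫ x, F n x ∂ν := by
    intro n
    have e : ∀ (κ : Measure ℝ), (∀ s : ℝ, Integrable (fun x => max (x - s) 0) κ) →
        ∫ x, F n x ∂κ = (n + 1 : ℝ) *
          (∫ x, max (x - t) 0 ∂κ - ∫ x, max (x - (t + 1/(n+1))) 0 ∂κ) := by
      intro κ hκi
      rw [hF]
      simp only
      rw [integral_const_mul, integral_sub (hκi t) ?_]
      · congr 2
        apply integral_congr_ae
        refine Eventually.of_forall fun x => ?_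
        ring_nf
      · have := hκi (t + 1/(n+1 : ℝ))
        apply this.congr
        refine Eventually.of_forall fun x => ?_
        ring_nf
    rw [e μ hμi, e ν hνi, hcall t, hcall (t + 1/(n+1))]
  have h1 := key μ inferInstance hμi
  have h2 := key ν inferInstance hνi
  rw [funext hFeq] at h1
  have := tendsto_nhds_unique h1 h2
  exact (ENNReal.toReal_eq_toReal_iff' (measure_ne_top μ _) (measure_ne_top ν _)).mp this

lemma dirDist_separates {μ ν : Measure ℝ} (hμ : IsP1 μ) (hν : IsP1 ν)
    (h1 : dirDist μ ν = 0) (h2 : dirDist ν μ = 0) : μ = ν := by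
  haveI := hμ.1
  haveI := hν.1
  have hcall : ∀ t : ℝ, ∫ x, max (x - t) 0 ∂μ = ∫ x, max (x - t) 0 ∂ν := by
    intro t
    have hm1 : ∫ x, max (x - t) 0 ∂μ - ∫ x, max (x - t) 0 ∂ν ≤ dirDist μ ν :=
      le_csSup (bddAbove_dirSet hμ hν) ⟨_, call_convex t, call_lip t, rfl⟩
    have hm2 : ∫ x, max (x - t) 0 ∂ν - ∫ x, max (x - t) 0 ∂μ ≤ dirDist ν μ :=
      le_csSup (bddAbove_dirSet hν hμ) ⟨_, call_convex t, call_lip t, rfl⟩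
    rw [h1] at hm1
    rw [h2] at hm2
    linarith
  have htail := tail_eq_of_calls
    (fun t => integrable_lipOn hμ (call_lip t))
    (fun t => integrable_lipOn hν (call_lip t)) hcall
  refine Measure.ext_of_Iic μ ν fun a => ?_
  have hμc : μ (Iic a) = μ univ - μ (Ioi a) := by
    rw [← compl_Ioi, measure_compl measurableSet_Ioi (measure_ne_top μ _)]
  have hνc : ν (Iic a) = ν univ - ν (Ioi a) := by
    rw [← compl_Ioi, measure_compl measurableSet_Ioi (measure_ne_top ν _)]
  rw [hμc, hνc, htail a, measure_univ, measure_univ]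

/-- `dirDist` is an asymmetric distance and `baDist` is a metric. -/
theorem dirDist_asymmetric_distance (μ ν ρ : Measure ℝ)
    (hμ : IsP1 μ) (hν : IsP1 ν) (hρ : IsP1 ρ) :
    0 ≤ dirDist μ ν ∧
    dirDist μ ρ ≤ dirDist μ ν + dirDist ν ρ ∧
    (dirDist μ ν = 0 → dirDist ν μ = 0 → μ = ν) ∧
    0 ≤ baDist μ ν ∧
    baDist μ ν = baDist ν μ ∧
    (baDist μ ν = 0 ↔ μ = ν) ∧
    baDist μ ρ ≤ baDist μ ν + baDist ν ρ := by
  have hnn1 := dirDist_nonneg' hμ hν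
  have hnn2 := dirDist_nonneg' hν hμ
  refine ⟨hnn1, dirDist_triangle' hμ hν hρ, dirDist_separates hμ hν, ?_, ?_, ?_, ?_⟩
  · unfold baDist; linarith
  · unfold baDist; ring
  · constructor
    · intro h
      unfold baDist at h
      have e1 : dirDist μ ν = 0 := by linarith
      have e2 : dirDist ν μ = 0 := by linarith
      exact dirDist_separates hμ hν e1 e2
    · rintro rfl
      unfold baDist
      rw [dirDist_self]
      norm_num
  · have t1 := dirDist_triangle' hμ hν hρ
    have t2 := dirDist_triangle' hρ hν hμ
    unfold baDist
    linarith
end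
end

section
/- If μ, ν ∈ P₁(ℝ₊) have identical barycenters, then d⃗(μ,ν) = 2 · sup_{K ≥ 0} ( E_μ[(X−K)⁺] − E_ν[(X−K)⁺] ). -/
open MeasureTheory Set Filter Topology
open scoped NNReal ENNReal

noncomputable section

def sl (φ : ℝ → ℝ) (n : ℕ) (i : ℕ) : ℝ := n * (φ (((i:ℝ)+1)/n) - φ ((i:ℝ)/n))

def pl (φ : ℝ → ℝ) (n : ℕ) (x : ℝ) : ℝ :=
  sl φ n 0 * x + ∑ i ∈ Finset.range (n*n),
    (sl φ n (i+1) - sl φ n i) * max (x - ((i:ℝ)+1)/n) 0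

lemma pl_eval (φ : ℝ → ℝ) (hφ0 : φ 0 = 0) {n j : ℕ} (hn : 1 ≤ n) {x : ℝ}
    (h1 : (j:ℝ)/n ≤ x) (h2 : x < ((j:ℝ)+1)/n) (hj : j < n*n) :
    pl φ n x = φ ((j:ℝ)/n) + sl φ n j * (x - (j:ℝ)/n) := by
  have hn0 : (n:ℝ) ≠ 0 := Nat.cast_ne_zero.mpr (by omega)
  have hnpos : (0:ℝ) < n := by positivity
  rw [pl, ← Finset.sum_subset (Finset.range_subset_range.mpr hj.le)
      (f := fun i => (sl φ n (i+1) - sl φ n i) * max (x - ((i:ℝ)+1)/n) 0)]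
  · have hcongr : ∀ i ∈ Finset.range j,
        (sl φ n (i+1) - sl φ n i) * max (x - ((i:ℝ)+1)/n) 0 =
        (sl φ n (i+1) * (x - ((i+1:ℕ):ℝ)/n) - sl φ n i * (x - (i:ℝ)/n))
          + (φ (((i+1:ℕ):ℝ)/n) - φ ((i:ℝ)/n)) := by
      intro i hi
      rw [Finset.mem_range] at hi
      have hle : ((i:ℝ)+1)/n ≤ (j:ℝ)/n := by
        apply (div_le_div_iff_of_pos_right hnpos).mpr
        exact_mod_cast Nat.succ_le_of_lt hi
      have hmax : max (x - ((i:ℝ)+1)/n) 0 = x - ((i:ℝ)+1)/n :=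
        max_eq_left (by linarith [hle.trans h1])
      rw [hmax, sl, sl]
      push_cast
      field_simp
      ring
    rw [Finset.sum_congr rfl hcongr, Finset.sum_add_distrib,
      Finset.sum_range_sub (f := fun i => sl φ n i * (x - (i:ℝ)/n)),
      Finset.sum_range_sub (f := fun i => φ ((i:ℝ)/n))]
    simp only [Nat.cast_zero, zero_div, hφ0, sub_zero]
    ring
  · intro i hi hni
    rw [Finset.mem_range, not_lt] at hni
    have h3 : x - ((i:ℝ)+1)/n ≤ 0 := by
      have hle : ((j:ℝ)+1)/n ≤ ((i:ℝ)+1)/n := by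
        apply (div_le_div_iff_of_pos_right hnpos).mpr
        have : (j:ℝ) ≤ (i:ℝ) := by exact_mod_cast hni
        linarith
      linarith
    rw [max_eq_right h3, mul_zero]

lemma sl_abs_le {φ : ℝ → ℝ} (hL : ∀ a b : ℝ, 0 ≤ a → 0 ≤ b → |φ a - φ b| ≤ |a - b|)
    (n i : ℕ) : |sl φ n i| ≤ 1 := by
  rcases Nat.eq_zero_or_pos n with h | h
  · simp [sl, h]
  have hn0 : (n:ℝ) ≠ 0 := Nat.cast_ne_zero.mpr h.ne'
  have hnpos : (0:ℝ) < n := by positivity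
  have h1 : |φ (((i:ℝ)+1)/n) - φ ((i:ℝ)/n)| ≤ 1/n := by
    have := hL (((i:ℝ)+1)/n) ((i:ℝ)/n) (by positivity) (by positivity)
    calc |φ (((i:ℝ)+1)/n) - φ ((i:ℝ)/n)| ≤ |((i:ℝ)+1)/n - (i:ℝ)/n| := this
    _ = 1/n := by rw [div_sub_div_same]; simp [abs_of_nonneg, hnpos.le]
  rw [sl, abs_mul, abs_of_nonneg hnpos.le]
  calc (n:ℝ) * |φ (((i:ℝ)+1)/n) - φ ((i:ℝ)/n)| ≤ n * (1/n) := by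
        exact mul_le_mul_of_nonneg_left h1 hnpos.le
  _ = 1 := by field_simp

lemma pl_approx {φ : ℝ → ℝ} (hφ0 : φ 0 = 0)
    (hL : ∀ a b : ℝ, 0 ≤ a → 0 ≤ b → |φ a - φ b| ≤ |a - b|)
    {n : ℕ} (hn : 1 ≤ n) {x : ℝ} (hx : 0 ≤ x) (hxn : x < n) :
    |pl φ n x - φ x| ≤ 2/n := by
  have hn0 : (n:ℝ) ≠ 0 := Nat.cast_ne_zero.mpr (by omega)
  have hnpos : (0:ℝ) < n := by positivity
  set j := ⌊x * n⌋₊ with hjdef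
  have hxn' : 0 ≤ x * n := by positivity
  have h1 : (j:ℝ)/n ≤ x := by
    rw [div_le_iff₀ hnpos]
    exact Nat.floor_le hxn'
  have h2 : x < ((j:ℝ)+1)/n := by
    rw [lt_div_iff₀ hnpos]
    exact Nat.lt_floor_add_one (x * n)
  have hj : j < n * n := by
    have : x * n < n * n := by
      apply mul_lt_mul_of_pos_right hxn hnpos
    have := (Nat.floor_lt hxn').mpr (by exact_mod_cast this)
    exact_mod_cast this
  rw [pl_eval φ hφ0 hn h1 h2 hj]
  have hd : x - (j:ℝ)/n < 1/n := by
    have he : ((j:ℝ)+1)/n = (j:ℝ)/n + 1/n := by ring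
    rw [he] at h2
    linarith
  have hd0 : 0 ≤ x - (j:ℝ)/n := by linarith
  have e1 : |φ ((j:ℝ)/n) - φ x| ≤ 1/n := by
    calc |φ ((j:ℝ)/n) - φ x| ≤ |(j:ℝ)/n - x| := hL _ _ (by positivity) hx
    _ ≤ 1/n := by rw [abs_sub_comm, abs_of_nonneg hd0]; linarith
  have e2 : |sl φ n j * (x - (j:ℝ)/n)| ≤ 1/n := by
    rw [abs_mul]
    calc |sl φ n j| * |x - (j:ℝ)/n| ≤ 1 * (1/n) := by
          apply mul_le_mul (sl_abs_le hL n j) ?_ (abs_nonneg _) zero_le_one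
          rw [abs_of_nonneg hd0]; linarith
    _ = 1/n := one_mul _
  calc |φ ((j:ℝ)/n) + sl φ n j * (x - (j:ℝ)/n) - φ x|
      ≤ |φ ((j:ℝ)/n) - φ x| + |sl φ n j * (x - (j:ℝ)/n)| := by
        rw [add_sub_right_comm]; exact abs_add_le _ _
  _ ≤ 1/n + 1/n := add_le_add e1 e2
  _ = 2/n := by ring

lemma sl_sum_le {φ : ℝ → ℝ} (hL : ∀ a b : ℝ, 0 ≤ a → 0 ≤ b → |φ a - φ b| ≤ |a - b|)
    (n : ℕ) : ∑ i ∈ Finset.range (n*n), (sl φ n (i+1) - sl φ n i) ≤ 2 := by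
  rw [Finset.sum_range_sub (f := fun i => sl φ n i)]
  have := sl_abs_le hL n (n*n)
  have := sl_abs_le hL n 0
  rw [abs_le] at *
  linarith [this.1, this.2]

lemma pl_bound {φ : ℝ → ℝ} (hL : ∀ a b : ℝ, 0 ≤ a → 0 ≤ b → |φ a - φ b| ≤ |a - b|)
    {n : ℕ} (ha : ∀ i, sl φ n i ≤ sl φ n (i+1)) (x : ℝ) :
    |pl φ n x| ≤ 3 * |x| := by
  rcases le_or_gt 0 x with hx | hx
  · have hterm : ∀ i ∈ Finset.range (n*n),
        (sl φ n (i+1) - sl φ n i) * max (x - ((i:ℝ)+1)/n) 0 ≤ (sl φ n (i+1) - sl φ n i) * x := by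
      intro i _
      apply mul_le_mul_of_nonneg_left ?_ (by linarith [ha i])
      apply max_le ?_ hx
      have : (0:ℝ) ≤ ((i:ℝ)+1)/n := by positivity
      linarith
    have hsum_nonneg : (0:ℝ) ≤ ∑ i ∈ Finset.range (n*n),
        (sl φ n (i+1) - sl φ n i) * max (x - ((i:ℝ)+1)/n) 0 :=
      Finset.sum_nonneg fun i _ => mul_nonneg (by linarith [ha i]) (le_max_right _ _)
    have hsum_le : ∑ i ∈ Finset.range (n*n),
        (sl φ n (i+1) - sl φ n i) * max (x - ((i:ℝ)+1)/n) 0 ≤ 2 * x := by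
      calc _ ≤ ∑ i ∈ Finset.range (n*n), (sl φ n (i+1) - sl φ n i) * x :=
            Finset.sum_le_sum hterm
      _ = (∑ i ∈ Finset.range (n*n), (sl φ n (i+1) - sl φ n i)) * x := by
            rw [Finset.sum_mul]
      _ ≤ 2 * x := mul_le_mul_of_nonneg_right (sl_sum_le hL n) hx
    have h0 : |sl φ n 0 * x| ≤ |x| := by
      rw [abs_mul]
      calc |sl φ n 0| * |x| ≤ 1 * |x| := mul_le_mul_of_nonneg_right (sl_abs_le hL n 0) (abs_nonneg _)
      _ = |x| := one_mul _
    rw [pl]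
    calc |sl φ n 0 * x + _| ≤ |sl φ n 0 * x| + |∑ i ∈ Finset.range (n*n),
        (sl φ n (i+1) - sl φ n i) * max (x - ((i:ℝ)+1)/n) 0| := abs_add_le _ _
    _ ≤ |x| + 2 * x := by
        apply add_le_add h0
        rw [abs_of_nonneg hsum_nonneg]; exact hsum_le
    _ ≤ 3 * |x| := by rw [abs_of_nonneg hx]; linarith
  · have hterm : ∀ i ∈ Finset.range (n*n),
        (sl φ n (i+1) - sl φ n i) * max (x - ((i:ℝ)+1)/n) 0 = 0 := by
      intro i _
      have : (0:ℝ) ≤ ((i:ℝ)+1)/n := by positivity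
      rw [max_eq_right (by linarith), mul_zero]
    rw [pl, Finset.sum_congr rfl hterm, Finset.sum_const_zero, add_zero, abs_mul]
    calc |sl φ n 0| * |x| ≤ 1 * |x| := mul_le_mul_of_nonneg_right (sl_abs_le hL n 0) (abs_nonneg _)
    _ ≤ 3 * |x| := by nlinarith [abs_nonneg x]

lemma int_call {μ : Measure ℝ} [IsFiniteMeasure μ] (hint : Integrable id μ) (K : ℝ) :
    Integrable (fun x => max (x - K) 0) μ := by
  have : Integrable (fun x : ℝ => x - K) μ := hint.sub (integrable_const K)
  exact this.pos_part

lemma pl_continuous (φ : ℝ → ℝ) (n : ℕ) : Continuous (pl φ n) := by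
  unfold pl
  apply Continuous.add
  · exact continuous_const.mul continuous_id
  · apply continuous_finset_sum
    intro i _
    exact continuous_const.mul ((continuous_id.sub continuous_const).max continuous_const)

lemma pl_integral {μ : Measure ℝ} [IsFiniteMeasure μ] (hint : Integrable id μ)
    (φ : ℝ → ℝ) (n : ℕ) :
    ∫ x, pl φ n x ∂μ = sl φ n 0 * ∫ x, x ∂μ +
      ∑ i ∈ Finset.range (n*n), (sl φ n (i+1) - sl φ n i) * ∫ x, max (x - ((i:ℝ)+1)/n) 0 ∂μ := by
  unfold pl
  rw [integral_add]
  · congr 1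
    · exact integral_const_mul _ _
    · rw [integral_finset_sum]
      · exact Finset.sum_congr rfl fun i _ => integral_const_mul _ _
      · exact fun i _ => (int_call hint _).const_mul _
  · exact hint.const_mul _
  · exact integrable_finset_sum _ fun i _ => (int_call hint _).const_mul _

/-- Normalized version of a test function: vanishes at 0, extended constantly to the left. -/
def nrm (ψ : ℝ → ℝ) : ℝ → ℝ := fun x => ψ (max x 0) - ψ 0

lemma nrm_lip {ψ : ℝ → ℝ} (hl : LipschitzOnWith 1 ψ (Ici (0:ℝ))) :
    ∀ a b : ℝ, 0 ≤ a → 0 ≤ b → |nrm ψ a - nrm ψ b| ≤ |a - b| := by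
  intro a b ha hb
  have := hl.dist_le_mul a ha b hb
  simp only [NNReal.coe_one, one_mul, Real.dist_eq] at this
  simpa [nrm, max_eq_left ha, max_eq_left hb] using this

lemma nrm_zero (ψ : ℝ → ℝ) : nrm ψ 0 = 0 := by simp [nrm]

lemma nrm_abs_le {ψ : ℝ → ℝ} (hl : LipschitzOnWith 1 ψ (Ici (0:ℝ))) (x : ℝ) :
    |nrm ψ x| ≤ |x| := by
  rcases le_or_gt 0 x with hx | hx
  · have := nrm_lip hl x 0 hx le_rfl
    simpa [nrm_zero] using this
  · have : nrm ψ x = 0 := by simp [nrm, max_eq_right hx.le]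
    rw [this]; simp [abs_nonneg]

lemma nrm_continuous {ψ : ℝ → ℝ} (hl : LipschitzOnWith 1 ψ (Ici (0:ℝ))) :
    Continuous (nrm ψ) := by
  apply Continuous.sub ?_ continuous_const
  exact hl.continuousOn.comp_continuous (continuous_id.max continuous_const)
    fun x => mem_Ici.mpr (le_max_right _ _)

lemma nrm_integrable {ψ : ℝ → ℝ} (hl : LipschitzOnWith 1 ψ (Ici (0:ℝ)))
    {μ : Measure ℝ} [IsFiniteMeasure μ] (hint : Integrable id μ) :
    Integrable (nrm ψ) μ := by
  apply Integrable.mono' hint.abs (nrm_continuous hl).aestronglyMeasurable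
  exact ae_of_all _ fun x => by simpa [Real.norm_eq_abs] using nrm_abs_le hl x

lemma nrm_convex {ψ : ℝ → ℝ} (hc : ConvexOn ℝ (Ici (0:ℝ)) ψ) :
    ConvexOn ℝ (Ici (0:ℝ)) (nrm ψ) := by
  refine ⟨convex_Ici 0, fun x hx y hy a b ha hb hab => ?_⟩
  have hxy : a • x + b • y ∈ Ici (0:ℝ) := (convex_Ici 0) hx hy ha hb hab
  have key := hc.2 hx hy ha hb hab
  have hm1 := max_eq_left (mem_Ici.mp hx)
  have hm2 := max_eq_left (mem_Ici.mp hy)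
  have hm3 := max_eq_left (mem_Ici.mp hxy)
  simp only [nrm, smul_eq_mul] at *
  rw [hm1, hm2, hm3]
  have h0 : a * ψ 0 + b * ψ 0 = ψ 0 := by rw [← add_mul, hab, one_mul]
  linarith

lemma integral_nrm {ψ : ℝ → ℝ} (hl : LipschitzOnWith 1 ψ (Ici (0:ℝ)))
    {μ : Measure ℝ} [IsProbabilityMeasure μ] (hpos : ∀ᵐ x ∂μ, 0 ≤ x)
    (hint : Integrable id μ) :
    ∫ x, ψ x ∂μ = ∫ x, nrm ψ x ∂μ + ψ 0 := by
  have h1 : ∫ x, ψ x ∂μ = ∫ x, nrm ψ x + ψ 0 ∂μ := by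
    apply integral_congr_ae
    filter_upwards [hpos] with x hx
    simp [nrm, max_eq_left hx]
  rw [h1, integral_add (nrm_integrable hl hint) (integrable_const _), integral_const]
  simp

lemma sl_mono {φ : ℝ → ℝ} (hc : ConvexOn ℝ (Ici (0:ℝ)) φ) (n i : ℕ) :
    sl φ n i ≤ sl φ n (i+1) := by
  rcases Nat.eq_zero_or_pos n with h | h
  · simp [sl, h]
  have hnpos : (0:ℝ) < n := by exact_mod_cast h
  have hn0 : (n:ℝ) ≠ 0 := hnpos.ne'
  set X : ℝ := (i:ℝ)/n
  set Y : ℝ := ((i:ℝ)+1)/n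
  set Z : ℝ := ((i:ℝ)+2)/n
  have hXY : X < Y := by
    apply (div_lt_div_iff_of_pos_right hnpos).mpr; linarith
  have hYZ : Y < Z := by
    apply (div_lt_div_iff_of_pos_right hnpos).mpr; linarith
  have key := hc.slope_mono_adjacent (x := X) (y := Y) (z := Z)
    (by simp only [X, mem_Ici]; positivity) (by simp only [Z, mem_Ici]; positivity) hXY hYZ
  have hYX : Y - X = 1/n := by simp only [X, Y]; ring
  have hZY : Z - Y = 1/n := by simp only [Y, Z]; ring
  rw [hYX, hZY] at key
  have key2 : (φ Y - φ X) * n ≤ (φ Z - φ Y) * n := by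
    have h' := (div_le_div_iff_of_pos_right (by positivity : (0:ℝ) < 1/n)).mp key
    exact mul_le_mul_of_nonneg_right h' hnpos.le
  have e1 : sl φ n i = (φ Y - φ X) * n := by rw [sl]; ring
  have e2 : sl φ n (i+1) = (φ Z - φ Y) * n := by
    rw [sl]
    push_cast
    have : ((i:ℝ)+1+1)/n = Z := by simp only [Z]; ring
    rw [this]
    have : ((i:ℝ)+1)/n = Y := rfl
    rw [this]; ring
  rw [e1, e2]; exact key2

lemma pl_tendsto_integral {φ : ℝ → ℝ} (hφ0 : φ 0 = 0)
    (hL : ∀ a b : ℝ, 0 ≤ a → 0 ≤ b → |φ a - φ b| ≤ |a - b|)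
    (ha : ∀ n i, sl φ n i ≤ sl φ n (i+1))
    {μ : Measure ℝ} [IsProbabilityMeasure μ] (hpos : ∀ᵐ x ∂μ, 0 ≤ x)
    (hint : Integrable id μ) :
    Tendsto (fun n => ∫ x, pl φ n x ∂μ) atTop (𝓝 (∫ x, φ x ∂μ)) := by
  apply tendsto_integral_of_dominated_convergence (bound := fun x => 3 * |x|)
  · exact fun n => (pl_continuous φ n).aestronglyMeasurable
  · exact hint.abs.const_mul 3
  · exact fun n => ae_of_all _ fun x => by
      simpa [Real.norm_eq_abs] using pl_bound hL (ha n) x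
  · filter_upwards [hpos] with x hx
    rw [tendsto_iff_dist_tendsto_zero]
    refine squeeze_zero' (Eventually.of_forall fun n => dist_nonneg) ?_
      (tendsto_const_div_atTop_nhds_zero_nat 2)
    · rw [eventually_atTop]
      refine ⟨⌈x⌉₊ + 1, fun n hn => ?_⟩
      have h1 : 1 ≤ n := by omega
      have h2 : x < n := by
        have : ((⌈x⌉₊:ℝ) + 1) ≤ n := by exact_mod_cast hn
        have := Nat.le_ceil x
        linarith
      rw [Real.dist_eq]
      exact pl_approx hφ0 hL h1 hx h2

lemma pl_integral_diff_le {μ ν : Measure ℝ}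
    [IsProbabilityMeasure μ] [IsProbabilityMeasure ν]
    (hintμ : Integrable id μ) (hintν : Integrable id ν)
    (hbar : ∫ x, x ∂μ = ∫ x, x ∂ν)
    (hTbdd : BddAbove {r : ℝ | ∃ K ≥ (0:ℝ),
      r = ∫ x, max (x - K) 0 ∂μ - ∫ x, max (x - K) 0 ∂ν})
    (hs0 : 0 ≤ sSup {r : ℝ | ∃ K ≥ (0:ℝ),
      r = ∫ x, max (x - K) 0 ∂μ - ∫ x, max (x - K) 0 ∂ν})
    {φ : ℝ → ℝ} (hL : ∀ a b : ℝ, 0 ≤ a → 0 ≤ b → |φ a - φ b| ≤ |a - b|)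
    (ha : ∀ n i, sl φ n i ≤ sl φ n (i+1)) (n : ℕ) :
    ∫ x, pl φ n x ∂μ - ∫ x, pl φ n x ∂ν ≤
      2 * sSup {r : ℝ | ∃ K ≥ (0:ℝ),
        r = ∫ x, max (x - K) 0 ∂μ - ∫ x, max (x - K) 0 ∂ν} := by
  set s := sSup {r : ℝ | ∃ K ≥ (0:ℝ),
        r = ∫ x, max (x - K) 0 ∂μ - ∫ x, max (x - K) 0 ∂ν} with hs
  rw [pl_integral hintμ, pl_integral hintν, hbar]
  have hstep : sl φ n 0 * ∫ x, x ∂ν +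
      (∑ i ∈ Finset.range (n*n), (sl φ n (i+1) - sl φ n i) * ∫ x, max (x - ((i:ℝ)+1)/n) 0 ∂μ) -
      (sl φ n 0 * ∫ x, x ∂ν +
      ∑ i ∈ Finset.range (n*n), (sl φ n (i+1) - sl φ n i) * ∫ x, max (x - ((i:ℝ)+1)/n) 0 ∂ν) =
      ∑ i ∈ Finset.range (n*n), (sl φ n (i+1) - sl φ n i) *
        ((∫ x, max (x - ((i:ℝ)+1)/n) 0 ∂μ) - ∫ x, max (x - ((i:ℝ)+1)/n) 0 ∂ν) := by
    simp only [mul_sub, Finset.sum_sub_distrib]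
    ring
  rw [hstep]
  calc ∑ i ∈ Finset.range (n*n), (sl φ n (i+1) - sl φ n i) *
        ((∫ x, max (x - ((i:ℝ)+1)/n) 0 ∂μ) - ∫ x, max (x - ((i:ℝ)+1)/n) 0 ∂ν)
      ≤ ∑ i ∈ Finset.range (n*n), (sl φ n (i+1) - sl φ n i) * s := by
        apply Finset.sum_le_sum
        intro i _
        apply mul_le_mul_of_nonneg_left ?_ (sub_nonneg.mpr (ha n i))
        apply le_csSup hTbdd
        exact ⟨((i:ℝ)+1)/n, by positivity, rfl⟩
  _ = (∑ i ∈ Finset.range (n*n), (sl φ n (i+1) - sl φ n i)) * s := by rw [Finset.sum_mul]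
  _ ≤ 2 * s := mul_le_mul_of_nonneg_right (sl_sum_le hL n) hs0

/-- with identical barycenters, the directed distance is twice the
maximal call-price discrepancy. -/
theorem dirDist_eq_two_mul_sup_call (μ ν : Measure ℝ) (hμ : IsP1 μ) (hν : IsP1 ν)
    (hbar : ∫ x, x ∂μ = ∫ x, x ∂ν) :
    dirDist μ ν =
      2 * sSup {r : ℝ | ∃ K ≥ (0:ℝ),
        r = ∫ x, max (x - K) 0 ∂μ - ∫ x, max (x - K) 0 ∂ν} := by
  haveI hPμ : IsProbabilityMeasure μ := hμ.1
  haveI hPν : IsProbabilityMeasure ν := hν.1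
  obtain ⟨-, hposμ, hintμ⟩ := hμ
  obtain ⟨-, hposν, hintν⟩ := hν
  have hintμ' : Integrable (fun x : ℝ => x) μ := hintμ
  have hintν' : Integrable (fun x : ℝ => x) ν := hintν
  set T := {r : ℝ | ∃ K ≥ (0:ℝ),
    r = ∫ x, max (x - K) 0 ∂μ - ∫ x, max (x - K) 0 ∂ν} with hT
  set D := {r : ℝ | ∃ ψ : ℝ → ℝ, ConvexOn ℝ (Ici (0:ℝ)) ψ ∧
    LipschitzOnWith 1 ψ (Ici (0:ℝ)) ∧ r = ∫ x, ψ x ∂μ - ∫ x, ψ x ∂ν} with hD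
  -- bounds for calls
  have hcall_nonneg : ∀ (ρ : Measure ℝ) (K : ℝ), 0 ≤ ∫ x, max (x - K) 0 ∂ρ :=
    fun ρ K => integral_nonneg fun x => le_max_right _ _
  have hcall_le : ∀ K : ℝ, 0 ≤ K → ∫ x, max (x - K) 0 ∂μ ≤ ∫ x, |x| ∂μ := by
    intro K hK
    apply integral_mono (int_call hintμ K) hintμ.abs
    intro x
    apply max_le ?_ (abs_nonneg x)
    calc x - K ≤ x := by linarith
    _ ≤ |x| := le_abs_self x
  have hTbdd : BddAbove T := by
    refine ⟨∫ x, |x| ∂μ, fun r hr => ?_⟩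
    obtain ⟨K, hK, rfl⟩ := hr
    have := hcall_nonneg ν K
    linarith [hcall_le K hK]
  have hcall0 : ∀ (ρ : Measure ℝ), (∀ᵐ x ∂ρ, 0 ≤ x) →
      ∫ x, max (x - 0) 0 ∂ρ = ∫ x, x ∂ρ := by
    intro ρ hpos
    apply integral_congr_ae
    filter_upwards [hpos] with x hx
    simp [max_eq_left, hx]
  have h0T : (0:ℝ) ∈ T := by
    refine ⟨0, le_rfl, ?_⟩
    rw [hcall0 μ hposμ, hcall0 ν hposν, hbar, sub_self]
  have hs0 : 0 ≤ sSup T := le_csSup hTbdd h0T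
  -- upper bound: every element of D is at most 2 * sSup T
  have hupper : ∀ r ∈ D, r ≤ 2 * sSup T := by
    rintro r ⟨ψ, hc, hl, rfl⟩
    set φ := nrm ψ with hφ
    have hL := nrm_lip hl
    have ha : ∀ n i, sl φ n i ≤ sl φ n (i+1) := fun n i => sl_mono (nrm_convex hc) n i
    have t1 := pl_tendsto_integral (nrm_zero ψ) hL ha hposμ hintμ
    have t2 := pl_tendsto_integral (nrm_zero ψ) hL ha hposν hintν
    have hkey := le_of_tendsto (t1.sub t2) (Eventually.of_forall
      (pl_integral_diff_le hintμ hintν hbar hTbdd hs0 hL ha))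
    rw [integral_nrm hl hposμ hintμ, integral_nrm hl hposν hintν]
    simpa using hkey
  -- D is nonempty and bounded above
  have h0D : (0:ℝ) ∈ D := by
    refine ⟨fun _ => 0, convexOn_const 0 (convex_Ici 0), ?_, by simp⟩
    exact ((LipschitzWith.const (α := ℝ) (0:ℝ)).weaken zero_le_one).lipschitzOnWith (s := Ici (0:ℝ))
  have hDbdd : BddAbove D := by
    refine ⟨∫ x, |x| ∂μ + ∫ x, |x| ∂ν, fun r hr => ?_⟩
    obtain ⟨ψ, hc, hl, rfl⟩ := hr
    rw [integral_nrm hl hposμ hintμ, integral_nrm hl hposν hintν]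
    have b1 : ∫ x, nrm ψ x ∂μ ≤ ∫ x, |x| ∂μ :=
      integral_mono (nrm_integrable hl hintμ) hintμ.abs
        fun x => (le_abs_self _).trans (nrm_abs_le hl x)
    have b2 : -(∫ x, |x| ∂ν) ≤ ∫ x, nrm ψ x ∂ν := by
      rw [← integral_neg]
      exact integral_mono hintν.abs.neg (nrm_integrable hl hintν)
        fun x => (neg_le_neg (nrm_abs_le hl x)).trans (neg_abs_le _)
    linarith
  have hD0 : 0 ≤ sSup D := le_csSup hDbdd h0D
  -- lower bound: 2 * (each element of T) belongs to D
  have hlow : ∀ r ∈ T, 2 * r ∈ D := by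
    rintro r ⟨K, hK, rfl⟩
    refine ⟨fun x => |x - K|, ?_, ?_, ?_⟩
    · refine ⟨convex_Ici 0, fun x _ y _ a b ha hb hab => ?_⟩
      simp only [smul_eq_mul]
      calc |a * x + b * y - K| = |a * (x - K) + b * (y - K)| := by
            congr 1; nlinarith [hab]
      _ ≤ |a * (x - K)| + |b * (y - K)| := abs_add_le _ _
      _ = a * |x - K| + b * |y - K| := by
            rw [abs_mul, abs_mul, abs_of_nonneg ha, abs_of_nonneg hb]
    · apply LipschitzWith.lipschitzOnWith
      apply LipschitzWith.of_dist_le_mul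
      intro x y
      rw [Real.dist_eq, Real.dist_eq, NNReal.coe_one, one_mul]
      have h := abs_abs_sub_abs_le_abs_sub (x - K) (y - K)
      have e : |(x - K) - (y - K)| = |x - y| := by congr 1; ring
      rw [e] at h
      simpa using h
    · have habs : ∀ x : ℝ, |x - K| = 2 * max (x - K) 0 - (x - K) := by
        intro x
        rcases le_total (x - K) 0 with h | h
        · rw [max_eq_right h, abs_of_nonpos h]; ring
        · rw [max_eq_left h, abs_of_nonneg h]; ring
      have hint_abs : ∀ (ρ : Measure ℝ) [IsProbabilityMeasure ρ], Integrable id ρ →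
          ∫ x, |x - K| ∂ρ = 2 * (∫ x, max (x - K) 0 ∂ρ) - (∫ x, x ∂ρ - K) := by
        intro ρ _ hi
        have hi' : Integrable (fun x : ℝ => x) ρ := hi
        calc ∫ x, |x - K| ∂ρ = ∫ x, 2 * max (x - K) 0 - (x - K) ∂ρ := by
              exact integral_congr_ae (ae_of_all _ fun x => habs x)
        _ = ∫ x, 2 * max (x - K) 0 ∂ρ - ∫ x, x - K ∂ρ :=
              integral_sub ((int_call hi K).const_mul 2) (hi'.sub (integrable_const K))
        _ = 2 * (∫ x, max (x - K) 0 ∂ρ) - (∫ x, x ∂ρ - K) := by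
              rw [integral_const_mul, integral_sub hi' (integrable_const K), integral_const]
              simp
      show 2 * _ = ∫ x, |x - K| ∂μ - ∫ x, |x - K| ∂ν
      rw [hint_abs μ hintμ, hint_abs ν hintν, hbar]
      ring
  have hlower : sSup T ≤ sSup D / 2 := by
    apply Real.sSup_le ?_ (by linarith)
    intro r hr
    have := le_csSup hDbdd (hlow r hr)
    linarith
  have hupper' : sSup D ≤ 2 * sSup T := Real.sSup_le hupper (by linarith)
  rw [dirDist]
  have : sSup D = dirDist μ ν := rfl
  linarith [hlower, hupper']
end
end

section
/- There exist sequences (μₙ), (νₙ) of probability measures with finite first moment such that d(μₙ,νₙ) → 0 while W₁(μₙ,νₙ) = 1 for every n. In particular, the bid–ask distance d and W₁ induce distinct topologies on P₁. -/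
open MeasureTheory Set Filter Topology
open scoped NNReal ENNReal

noncomputable section

/-- Kantorovich–Rubinstein form of the 1-Wasserstein distance. -/
def W1 (μ ν : Measure ℝ) : ℝ :=
  sSup {r : ℝ | ∃ φ : ℝ → ℝ, LipschitzOnWith 1 φ (Ici (0:ℝ)) ∧
    r = ∫ x, φ x ∂μ - ∫ x, φ x ∂ν}

namespace BAaux

lemma integrable_dirac (f : ℝ → ℝ) (a : ℝ) : Integrable f (Measure.dirac a) :=
  (integrable_const (f a)).congr (ae_eq_dirac f).symm

lemma integral_sum_dirac (s : Finset ℕ) (p : ℕ → ℝ) (f : ℝ → ℝ) :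
    ∫ x, f x ∂(∑ k ∈ s, Measure.dirac (p k)) = ∑ k ∈ s, f (p k) := by
  rw [integral_finset_sum_measure fun i _ => integrable_dirac f (p i)]
  simp [integral_dirac]

/-- `μ n` : uniform on the odd integers 1, 3, …, 4n+1. -/
def mu (n : ℕ) : Measure ℝ :=
  (((2*n+1 : ℕ) : ℝ≥0∞))⁻¹ • ∑ k ∈ Finset.range (2*n+1), Measure.dirac (2*(k:ℝ)+1)

/-- `ν n` : μ n convolved with the Rademacher distribution. -/
def nu (n : ℕ) : Measure ℝ :=
  (((2*(2*n+1) : ℕ) : ℝ≥0∞))⁻¹ •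
    ((∑ k ∈ Finset.range (2*n+1), Measure.dirac (2*(k:ℝ))) +
     (∑ k ∈ Finset.range (2*n+1), Measure.dirac (2*(k:ℝ)+2)))

lemma integral_mu (n : ℕ) (f : ℝ → ℝ) :
    ∫ x, f x ∂(mu n) = (((2*n+1:ℕ)):ℝ)⁻¹ * ∑ k ∈ Finset.range (2*n+1), f (2*(k:ℝ)+1) := by
  rw [mu, integral_smul_measure, integral_sum_dirac, ENNReal.toReal_inv,
    ENNReal.toReal_natCast, smul_eq_mul]

lemma integral_nu (n : ℕ) (f : ℝ → ℝ) :
    ∫ x, f x ∂(nu n) = (((2*(2*n+1):ℕ)):ℝ)⁻¹ *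
      ((∑ k ∈ Finset.range (2*n+1), f (2*(k:ℝ))) +
       (∑ k ∈ Finset.range (2*n+1), f (2*(k:ℝ)+2))) := by
  rw [nu, integral_smul_measure,
    integral_add_measure (integrable_finset_sum_measure.2 fun i _ => integrable_dirac f _)
      (integrable_finset_sum_measure.2 fun i _ => integrable_dirac f _),
    integral_sum_dirac, integral_sum_dirac, ENNReal.toReal_inv,
    ENNReal.toReal_natCast, smul_eq_mul]

lemma integral_diff (n : ℕ) (f : ℝ → ℝ) :
    ∫ x, f x ∂(mu n) - ∫ x, f x ∂(nu n)
      = (((2*n+1:ℕ)):ℝ)⁻¹ * ∑ k ∈ Finset.range (2*n+1),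
          (f (2*(k:ℝ)+1) - (f (2*(k:ℝ)) + f (2*(k:ℝ)+2))/2) := by
  have hN : (((2*n+1:ℕ)):ℝ) ≠ 0 := Nat.cast_ne_zero.2 (by omega)
  rw [integral_mu, integral_nu, Finset.sum_sub_distrib]
  rw [show (∑ k ∈ Finset.range (2*n+1), (f (2*(k:ℝ)) + f (2*(k:ℝ)+2))/2)
      = ((∑ k ∈ Finset.range (2*n+1), f (2*(k:ℝ))) +
         (∑ k ∈ Finset.range (2*n+1), f (2*(k:ℝ)+2)))/2 from by
    rw [← Finset.sum_div, Finset.sum_add_distrib]]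
  push_cast
  field_simp

/-- the sawtooth function : distance to the even integers -/
def saw (x : ℝ) : ℝ := Metric.infDist x (Set.range (fun m : ℤ => 2*(m:ℝ)))

lemma saw_lip : LipschitzWith 1 saw := Metric.lipschitz_infDist_pt _

lemma saw_even (k : ℕ) : saw (2*(k:ℝ)) = 0 :=
  Metric.infDist_zero_of_mem ⟨(k:ℤ), by push_cast; ring⟩

lemma saw_odd (k : ℕ) : saw (2*(k:ℝ)+1) = 1 := by
  have hmem : (2*(k:ℝ)) ∈ Set.range (fun m : ℤ => 2*(m:ℝ)) := ⟨(k:ℤ), by push_cast; ring⟩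
  have hne : (Set.range (fun m : ℤ => 2*(m:ℝ))).Nonempty := ⟨_, hmem⟩
  refine le_antisymm ?_ ?_
  · have := Metric.infDist_le_dist_of_mem (x := 2*(k:ℝ)+1) hmem
    simpa [saw, Real.dist_eq] using this
  · by_contra h
    push_neg at h
    rw [show saw (2*(k:ℝ)+1) = Metric.infDist (2*(k:ℝ)+1) _ from rfl] at h
    rcases (Metric.infDist_lt_iff hne).1 h with ⟨y, ⟨m, rfl⟩, hy⟩
    have h1 : (1:ℝ) ≤ |2*(k:ℝ)+1 - 2*(m:ℝ)| := by
      have hz : (2*(k:ℤ)+1 - 2*m) ≠ 0 := by omega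
      have := Int.one_le_abs hz
      calc (1:ℝ) ≤ |((2*(k:ℤ)+1 - 2*m : ℤ) : ℝ)| := by
              rw [← Int.cast_abs]; exact_mod_cast this
        _ = |2*(k:ℝ)+1 - 2*(m:ℝ)| := by push_cast; ring_nf
    rw [Real.dist_eq] at hy
    linarith

lemma lip_diff {ψ : ℝ → ℝ} (h : LipschitzOnWith 1 ψ (Ici (0:ℝ))) {a b : ℝ}
    (ha : 0 ≤ a) (hb : 0 ≤ b) : |ψ a - ψ b| ≤ |a - b| := by
  have := h.dist_le_mul a ha b hb
  simpa [Real.dist_eq] using this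

lemma midpoint_le {ψ : ℝ → ℝ} (hc : ConvexOn ℝ (Ici (0:ℝ)) ψ) {a b : ℝ}
    (ha : 0 ≤ a) (hb : 0 ≤ b) : ψ ((a+b)/2) ≤ (ψ a + ψ b)/2 := by
  have h := hc.2 (mem_Ici.2 ha) (mem_Ici.2 hb)
    (by norm_num : (0:ℝ) ≤ 1/2) (by norm_num : (0:ℝ) ≤ 1/2) (by norm_num)
  simp only [smul_eq_mul] at h
  have harg : (1/2:ℝ) * a + (1/2:ℝ) * b = (a+b)/2 := by ring
  rw [harg] at h
  linarith

lemma ae_nonneg_of (μ : Measure ℝ) (h : μ (Iio 0) = 0) : ∀ᵐ x ∂μ, 0 ≤ x := by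
  rw [ae_iff, show {x:ℝ | ¬ 0 ≤ x} = Iio 0 from by ext x; simp [not_le]]
  exact h

lemma sum_dirac_Iio (s : Finset ℕ) (p : ℕ → ℝ) (hp : ∀ k, 0 ≤ p k) :
    (∑ k ∈ s, Measure.dirac (p k)) (Iio 0) = 0 := by
  rw [Measure.finset_sum_apply]
  refine Finset.sum_eq_zero fun k _ => ?_
  rw [Measure.dirac_apply]
  exact Set.indicator_of_notMem (by simpa using (hp k).not_gt) 1

lemma isP1_mu (n : ℕ) : IsP1 (mu n) := by
  have hN0 : ((2*n+1 : ℕ) : ℝ≥0∞) ≠ 0 := by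
    simpa using (by omega : (2*n+1:ℕ) ≠ 0)
  refine ⟨⟨?_⟩, ?_, ?_⟩
  · rw [mu, Measure.smul_apply, Measure.finset_sum_apply]
    simp only [Measure.dirac_apply_of_mem (Set.mem_univ _), Finset.sum_const,
      Finset.card_range, nsmul_eq_mul, mul_one, smul_eq_mul]
    exact ENNReal.inv_mul_cancel hN0 (ENNReal.natCast_ne_top _)
  · refine ae_nonneg_of _ ?_
    rw [mu, Measure.smul_apply, sum_dirac_Iio _ _ (fun k => by positivity)]
    simp
  · exact ((integrable_finset_sum_measure).2 fun i _ => integrable_dirac id _).smul_measure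
      (by simp [hN0])

lemma isP1_nu (n : ℕ) : IsP1 (nu n) := by
  have hN0 : ((2*(2*n+1) : ℕ) : ℝ≥0∞) ≠ 0 := by
    simpa using (by omega : (2*(2*n+1):ℕ) ≠ 0)
  refine ⟨⟨?_⟩, ?_, ?_⟩
  · rw [nu, Measure.smul_apply, Measure.add_apply, Measure.finset_sum_apply,
      Measure.finset_sum_apply]
    simp only [Measure.dirac_apply_of_mem (Set.mem_univ _), Finset.sum_const,
      Finset.card_range, nsmul_eq_mul, mul_one, smul_eq_mul]
    rw [show ((2*n+1 : ℕ) : ℝ≥0∞) + ((2*n+1 : ℕ) : ℝ≥0∞) = ((2*(2*n+1) : ℕ) : ℝ≥0∞) from by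
      push_cast; ring]
    exact ENNReal.inv_mul_cancel hN0 (ENNReal.natCast_ne_top _)
  · refine ae_nonneg_of _ ?_
    rw [nu, Measure.smul_apply, Measure.add_apply,
      sum_dirac_Iio _ _ (fun k => by positivity),
      sum_dirac_Iio _ _ (fun k => by positivity)]
    simp
  · exact (((integrable_finset_sum_measure).2 fun i _ => integrable_dirac id _).add_measure
      ((integrable_finset_sum_measure).2 fun i _ => integrable_dirac id _)).smul_measure
      (by simp [hN0])

lemma W1_eq (n : ℕ) : W1 (mu n) (nu n) = 1 := by
  have hN : (((2*n+1:ℕ)):ℝ) ≠ 0 := Nat.cast_ne_zero.2 (by omega)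
  apply IsGreatest.csSup_eq
  constructor
  · refine ⟨saw, (saw_lip.lipschitzOnWith : LipschitzOnWith 1 saw (Ici (0:ℝ))), ?_⟩
    rw [integral_diff]
    have hterm : ∀ k ∈ Finset.range (2*n+1),
        (saw (2*(k:ℝ)+1) - (saw (2*(k:ℝ)) + saw (2*(k:ℝ)+2))/2) = 1 := by
      intro k _
      rw [saw_odd, saw_even, show (2*(k:ℝ)+2) = 2*((k+1:ℕ):ℝ) from by push_cast; ring,
        saw_even]
      norm_num
    rw [Finset.sum_congr rfl hterm, Finset.sum_const, Finset.card_range, nsmul_eq_mul,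
      mul_one]
    exact (inv_mul_cancel₀ hN).symm
  · rintro r ⟨φ, hlip, rfl⟩
    rw [integral_diff]
    have hsum : ∑ k ∈ Finset.range (2*n+1),
        (φ (2*(k:ℝ)+1) - (φ (2*(k:ℝ)) + φ (2*(k:ℝ)+2))/2) ≤ (2*n+1 : ℕ) := by
      calc _ ≤ ∑ _k ∈ Finset.range (2*n+1), (1:ℝ) := by
              refine Finset.sum_le_sum fun k _ => ?_
              have h1 := lip_diff hlip (by positivity : (0:ℝ) ≤ 2*(k:ℝ)+1)
                (by positivity : (0:ℝ) ≤ 2*(k:ℝ))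
              have h2 := lip_diff hlip (by positivity : (0:ℝ) ≤ 2*(k:ℝ)+1)
                (by positivity : (0:ℝ) ≤ 2*(k:ℝ)+2)
              rw [show (2*(k:ℝ)+1 - 2*(k:ℝ)) = 1 from by ring] at h1
              rw [show (2*(k:ℝ)+1 - (2*(k:ℝ)+2)) = -1 from by ring] at h2
              norm_num at h1 h2
              have := abs_le.1 h1
              have := abs_le.1 h2
              have ha : φ (2*(k:ℝ)+1) - φ (2*(k:ℝ)) ≤ 1 := by
                have := le_abs_self (φ (2*(k:ℝ)+1) - φ (2*(k:ℝ))); linarith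
              have hb : φ (2*(k:ℝ)+1) - φ (2*(k:ℝ)+2) ≤ 1 := by
                have := le_abs_self (φ (2*(k:ℝ)+1) - φ (2*(k:ℝ)+2)); linarith
              linarith
        _ = (2*n+1 : ℕ) := by simp
    calc (((2*n+1:ℕ)):ℝ)⁻¹ * ∑ k ∈ Finset.range (2*n+1),
          (φ (2*(k:ℝ)+1) - (φ (2*(k:ℝ)) + φ (2*(k:ℝ)+2))/2)
        ≤ (((2*n+1:ℕ)):ℝ)⁻¹ * ((2*n+1:ℕ):ℝ) := by
          exact mul_le_mul_of_nonneg_left hsum (by positivity)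
      _ = 1 := inv_mul_cancel₀ hN

lemma zero_mem_dir (μ ν : Measure ℝ) :
    (0:ℝ) ∈ {r : ℝ | ∃ ψ : ℝ → ℝ, ConvexOn ℝ (Ici (0:ℝ)) ψ ∧
      LipschitzOnWith 1 ψ (Ici (0:ℝ)) ∧ r = ∫ x, ψ x ∂μ - ∫ x, ψ x ∂ν} := by
  refine ⟨fun _ => 0, convexOn_const 0 (convex_Ici 0),
    ((((LipschitzWith.const (0:ℝ)).weaken (zero_le_one)).lipschitzOnWith) : LipschitzOnWith 1 (fun _ => (0:ℝ)) (Ici (0:ℝ))), by simp⟩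

lemma dir_mu_nu (n : ℕ) : dirDist (mu n) (nu n) = 0 := by
  apply IsGreatest.csSup_eq
  refine ⟨zero_mem_dir _ _, ?_⟩
  rintro r ⟨ψ, hc, hl, rfl⟩
  rw [integral_diff]
  refine mul_nonpos_of_nonneg_of_nonpos (by positivity) ?_
  refine Finset.sum_nonpos fun k _ => ?_
  have h := midpoint_le hc (by positivity : (0:ℝ) ≤ 2*(k:ℝ))
    (by positivity : (0:ℝ) ≤ 2*(k:ℝ)+2)
  rw [show ((2*(k:ℝ)) + (2*(k:ℝ)+2))/2 = 2*(k:ℝ)+1 from by ring] at h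
  linarith

lemma dir_nu_mu_le (n : ℕ) {r : ℝ}
    (hr : r ∈ {r : ℝ | ∃ ψ : ℝ → ℝ, ConvexOn ℝ (Ici (0:ℝ)) ψ ∧
      LipschitzOnWith 1 ψ (Ici (0:ℝ)) ∧ r = ∫ x, ψ x ∂(nu n) - ∫ x, ψ x ∂(mu n)}) :
    r ≤ (((2*n+1:ℕ)):ℝ)⁻¹ := by
  obtain ⟨ψ, hc, hl, rfl⟩ := hr
  have hN : (((2*n+1:ℕ)):ℝ) ≠ 0 := Nat.cast_ne_zero.2 (by omega)
  -- slopes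
  set s : ℕ → ℝ := fun j => ψ ((j:ℝ)+1) - ψ (j:ℝ) with hs
  have hmono : ∀ j : ℕ, s j ≤ s (j+1) := by
    intro j
    have h := midpoint_le hc (by positivity : (0:ℝ) ≤ (j:ℝ))
      (by positivity : (0:ℝ) ≤ (j:ℝ)+2)
    rw [show ((j:ℝ) + ((j:ℝ)+2))/2 = (j:ℝ)+1 from by ring] at h
    simp only [hs]
    push_cast
    rw [show (j:ℝ)+1+1 = (j:ℝ)+2 from by ring]
    linarith
  have habs : ∀ j : ℕ, |s j| ≤ 1 := by
    intro j
    have := lip_diff hl (by positivity : (0:ℝ) ≤ (j:ℝ)+1) (by positivity : (0:ℝ) ≤ (j:ℝ))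
    simpa using this
  -- telescoping bound
  have htel : ∑ k ∈ Finset.range (2*n+1), (s (2*k+1) - s (2*k)) ≤ 2 := by
    have h1 : ∑ k ∈ Finset.range (2*n+1), (s (2*k+1) - s (2*k))
        ≤ ∑ k ∈ Finset.range (2*n+1), (s (2*(k+1)) - s (2*k)) := by
      refine Finset.sum_le_sum fun k _ => ?_
      have := hmono (2*k+1)
      have heq : 2*(k+1) = 2*k+1+1 := by omega
      rw [heq]
      linarith
    have h2 : ∑ k ∈ Finset.range (2*n+1), (s (2*(k+1)) - s (2*k))
        = s (2*(2*n+1)) - s 0 := Finset.sum_range_sub (fun k => s (2*k)) (2*n+1)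
    have ha := abs_le.1 (habs (2*(2*n+1)))
    have hb := abs_le.1 (habs 0)
    linarith
  -- conclude
  have hkey : ∫ x, ψ x ∂(BAaux.nu n) - ∫ x, ψ x ∂(BAaux.mu n)
      = (((2*n+1:ℕ)):ℝ)⁻¹ * ∑ k ∈ Finset.range (2*n+1),
          ((ψ (2*(k:ℝ)) + ψ (2*(k:ℝ)+2))/2 - ψ (2*(k:ℝ)+1)) := by
    have h := integral_diff n ψ
    have h2 : ∑ k ∈ Finset.range (2*n+1),
        ((ψ (2*(k:ℝ)) + ψ (2*(k:ℝ)+2))/2 - ψ (2*(k:ℝ)+1))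
        = -∑ k ∈ Finset.range (2*n+1),
            (ψ (2*(k:ℝ)+1) - (ψ (2*(k:ℝ)) + ψ (2*(k:ℝ)+2))/2) := by
      rw [← Finset.sum_neg_distrib]
      exact Finset.sum_congr rfl fun k _ => by ring
    rw [h2, mul_neg, ← h]
    ring
  have hterm : ∀ k ∈ Finset.range (2*n+1),
      ((ψ (2*(k:ℝ)) + ψ (2*(k:ℝ)+2))/2 - ψ (2*(k:ℝ)+1))
        = (s (2*k+1) - s (2*k))/2 := by
    intro k _
    simp only [hs]
    push_cast
    ring
  rw [hkey, Finset.sum_congr rfl hterm, ← Finset.sum_div]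
  have hhalf : (∑ k ∈ Finset.range (2*n+1), (s (2*k+1) - s (2*k)))/2 ≤ 1 := by linarith
  calc (((2*n+1:ℕ)):ℝ)⁻¹ * ((∑ k ∈ Finset.range (2*n+1), (s (2*k+1) - s (2*k)))/2)
      ≤ (((2*n+1:ℕ)):ℝ)⁻¹ * 1 := mul_le_mul_of_nonneg_left hhalf (by positivity)
    _ = (((2*n+1:ℕ)):ℝ)⁻¹ := mul_one _

end BAaux

/-- `baDist` can vanish along a sequence while `W1` stays equal to 1;
in particular the two metrics induce distinct topologies. -/
theorem baDist_W1_distinct_topologies :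
    ∃ μ ν : ℕ → Measure ℝ,
      (∀ n, IsP1 (μ n)) ∧ (∀ n, IsP1 (ν n)) ∧
      Tendsto (fun n => baDist (μ n) (ν n)) atTop (nhds 0) ∧
      ∀ n, W1 (μ n) (ν n) = 1 := by
  refine ⟨BAaux.mu, BAaux.nu, BAaux.isP1_mu, BAaux.isP1_nu, ?_, BAaux.W1_eq⟩
  have hupper : ∀ n, dirDist (BAaux.nu n) (BAaux.mu n) ≤ (((2*n+1:ℕ)):ℝ)⁻¹ := by
    intro n
    rw [dirDist]
    exact Real.sSup_le (fun r hr => BAaux.dir_nu_mu_le n hr) (by positivity)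
  have hlower : ∀ n, 0 ≤ dirDist (BAaux.nu n) (BAaux.mu n) := by
    intro n
    rw [dirDist]
    exact le_csSup ⟨(((2*n+1:ℕ)):ℝ)⁻¹, fun r hr => BAaux.dir_nu_mu_le n hr⟩
      (BAaux.zero_mem_dir _ _)
  apply squeeze_zero (g := fun n : ℕ => (((2*n+1:ℕ)):ℝ)⁻¹)
  · intro n
    rw [baDist, BAaux.dir_mu_nu]
    have := hlower n
    linarith
  · intro n
    rw [baDist, BAaux.dir_mu_nu]
    have h1 := hupper n
    have h2 : (0:ℝ) ≤ (((2*n+1:ℕ)):ℝ)⁻¹ := by positivity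
    linarith
  · have h1 : Tendsto (fun n : ℕ => (((2*n+1:ℕ)):ℝ)) atTop atTop := by
      apply tendsto_natCast_atTop_atTop.comp
      exact tendsto_atTop_mono (fun n => by simp only [id_eq]; omega) tendsto_id
    exact h1.inv_tendsto_atTop
end
end

section
/- Gradient estimate for uniformly close convex functions: let ψ : ℝ → ℝ be C¹ convex with M-Lipschitz derivative, and let φ : ℝ → ℝ be convex with sup_x |ψ(x) − φ(x)| ≤ ε. Then every subgradient γ ∈ ∂φ(x) satisfies |γ − ψ'(x)| ≤ 2√(Mε), uniformly in x. -/
open MeasureTheory Set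

/-- gradient estimate for uniformly close convex functions. -/
theorem subgradient_close_of_uniformly_close_convex
    (ψ φ : ℝ → ℝ) (M ε : ℝ) (hM : 0 < M) (hε : 0 < ε)
    (hψc : ConvexOn ℝ Set.univ ψ) (hψd : Differentiable ℝ ψ)
    (hlip : LipschitzWith (Real.toNNReal M) (deriv ψ))
    (hφ : ConvexOn ℝ Set.univ φ)
    (hclose : ∀ x, |ψ x - φ x| ≤ ε)
    (x γ : ℝ) (hγ : ∀ y, φ x + γ * (y - x) ≤ φ y) :
    |γ - deriv ψ x| ≤ 2 * Real.sqrt (M * ε) := by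
  set d := deriv ψ x with hd
  have hlip' : ∀ a b : ℝ, |deriv ψ a - deriv ψ b| ≤ M * |a - b| := by
    intro a b
    have := hlip.dist_le_mul a b
    simpa [Real.dist_eq, Real.coe_toNNReal M hM.le] using this
  -- quadratic upper bound from Lipschitz derivative
  have hquad : ∀ t : ℝ, ψ (x + t) ≤ ψ x + d * t + M / 2 * t ^ 2 := by
    intro t
    set g : ℝ → ℝ := fun t => M / 2 * t ^ 2 - (ψ (x + t) - ψ x - d * t) with hg
    have hgd : ∀ s : ℝ, HasDerivAt g (M * s - (deriv ψ (x + s) - d)) s := by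
      intro s
      have h1 : HasDerivAt (fun s : ℝ => ψ (x + s)) (deriv ψ (x + s)) s := by
        have := ((hψd (x + s)).hasDerivAt).comp s ((hasDerivAt_id s).const_add x)
        exact this.congr_deriv (by simp)
      have h2 : HasDerivAt (fun s : ℝ => M / 2 * s ^ 2) (M * s) s := by
        have := (hasDerivAt_pow 2 s).const_mul (M / 2)
        exact this.congr_deriv (by norm_num; ring)
      have h3 : HasDerivAt (fun s : ℝ => ψ (x + s) - ψ x - d * s) (deriv ψ (x + s) - d) s := by
        have := (h1.sub_const (ψ x)).sub ((hasDerivAt_id s).const_mul d)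
        exact this.congr_deriv (by simp)
      exact h2.sub h3
    have hdg : Differentiable ℝ g := fun s => (hgd s).differentiableAt
    have hderiv : ∀ s : ℝ, deriv g s = M * s - (deriv ψ (x + s) - d) := fun s => (hgd s).deriv
    have hg0 : g 0 = 0 := by simp [hg]
    have hkey : ∀ s : ℝ, |deriv ψ (x + s) - d| ≤ M * |s| := by
      intro s
      have := hlip' (x + s) x
      simpa [hd] using this
    have hgt : 0 ≤ g t := by
      rcases le_total 0 t with ht | ht
      · have hmono : MonotoneOn g (Set.Ici (0 : ℝ)) := by
          apply monotoneOn_of_deriv_nonneg (convex_Ici 0) hdg.continuous.continuousOn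
          · exact fun s _ => (hdg s).differentiableWithinAt
          · intro s hs
            rw [interior_Ici] at hs
            rw [hderiv s]
            have h1 := hkey s
            have h2 : |deriv ψ (x + s) - d| ≤ M * s := by
              rwa [abs_of_pos (show (0:ℝ) < s from hs)] at h1
            have := (abs_le.mp h2).2
            linarith
        have := hmono (Set.self_mem_Ici) (Set.mem_Ici.mpr ht) ht
        linarith [hg0]
      · have hanti : AntitoneOn g (Set.Iic (0 : ℝ)) := by
          apply antitoneOn_of_deriv_nonpos (convex_Iic 0) hdg.continuous.continuousOn
          · exact fun s _ => (hdg s).differentiableWithinAt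
          · intro s hs
            rw [interior_Iic] at hs
            rw [hderiv s]
            have h1 := hkey s
            have h2 : |deriv ψ (x + s) - d| ≤ M * (-s) := by
              rwa [abs_of_neg (show s < (0:ℝ) from hs)] at h1
            have := (abs_le.mp h2).1
            linarith
        have := hanti (Set.mem_Iic.mpr ht) (Set.self_mem_Iic) ht
        linarith [hg0]
    have : 0 ≤ M / 2 * t ^ 2 - (ψ (x + t) - ψ x - d * t) := hgt
    linarith
  -- key inequality
  have key : ∀ t : ℝ, (γ - d) * t ≤ 2 * ε + M / 2 * t ^ 2 := by
    intro t
    have h1 := hγ (x + t)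
    have h2 := abs_le.mp (hclose x)
    have h3 := abs_le.mp (hclose (x + t))
    have h4 := hquad t
    have h5 : φ x + γ * t ≤ φ (x + t) := by simpa using h1
    nlinarith [h2.1, h2.2, h3.1, h3.2]
  have hsq : (γ - d) ^ 2 ≤ 4 * M * ε := by
    have h := key ((γ - d) / M)
    have hM' : M ≠ 0 := hM.ne'
    have h2 : (γ - d) * ((γ - d) / M) = (γ - d) ^ 2 / M := by ring
    rw [h2] at h
    have h3 : M / 2 * ((γ - d) / M) ^ 2 = (γ - d) ^ 2 / (2 * M) := by
      field_simp
    rw [h3, div_le_iff₀ hM] at h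
    have h4 : (γ - d) ^ 2 / (2 * M) * M = (γ - d) ^ 2 / 2 := by
      field_simp
    nlinarith
  have habs : |γ - d| = Real.sqrt ((γ - d) ^ 2) := (Real.sqrt_sq_eq_abs _).symm
  rw [habs]
  have h1 : Real.sqrt ((γ - d) ^ 2) ≤ Real.sqrt (4 * M * ε) := Real.sqrt_le_sqrt hsq
  have h2 : Real.sqrt (4 * M * ε) = 2 * Real.sqrt (M * ε) := by
    rw [show (4 : ℝ) * M * ε = 2 ^ 2 * (M * ε) by ring,
      Real.sqrt_mul (by norm_num : (0:ℝ) ≤ 2 ^ 2), Real.sqrt_sq (by norm_num : (0:ℝ) ≤ 2)]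
  linarith
end

section
/- Digital option in a one-sided market: let μᵃ ∈ P₁(ℝ₊) be atomless with mean x₀, K > x₀, and L⋆ < K with ∫_{L⋆}^∞ (x−K) μᵃ(dx) = 0. Then (i) μ⋆ := μᵃ restricted to [0,L⋆] plus μᵃ([L⋆,∞)) δ_K satisfies δ_{x₀} ≼c μ⋆ ≼c μᵃ; (ii) the call-spread profile ψ_{L⋆}(x) = (x−L⋆)⁺/(K−L⋆) dominates the digital payoff 1_{x ≥ K}; and (iii) sup_{μ ≼c μᵃ} μ([K,∞)) = μᵃ(ψ_{L⋆}) = μᵃ([L⋆,∞)). -/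
open MeasureTheory Set Filter Topology
open scoped NNReal ENNReal

noncomputable section

/-- Subgradient at an interior point. -/
lemma subgrad {ψ : ℝ → ℝ} (hψ : ConvexOn ℝ (Ici 0) ψ) {m : ℝ} (hm : 0 < m) :
    ∃ c : ℝ, ∀ x, 0 ≤ x → ψ m + c * (x - m) ≤ ψ x := by
  set T : Set ℝ := (fun y => (ψ m - ψ y) / (m - y)) '' Ico 0 m with hT
  have hne : T.Nonempty := ⟨_, ⟨m / 2, ⟨le_of_lt (by linarith), by linarith⟩, rfl⟩⟩
  have hub : ∀ z > m, ∀ r ∈ T, r ≤ (ψ z - ψ m) / (z - m) := by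
    rintro z hz r ⟨y, ⟨hy0, hym⟩, rfl⟩
    have := hψ.slope_mono_adjacent (x := y) (y := m) (z := z) hy0 (le_of_lt (hm.trans hz)) hym hz
    simpa using this
  have hbdd : BddAbove T := ⟨(ψ (m + 1) - ψ m) / (m + 1 - m), fun r hr => hub (m + 1) (by linarith) r hr⟩
  refine ⟨sSup T, fun x hx => ?_⟩
  rcases lt_trichotomy x m with h | h | h
  · have hmem : (ψ m - ψ x) / (m - x) ∈ T := ⟨x, ⟨hx, h⟩, rfl⟩
    have h1 : (ψ m - ψ x) / (m - x) ≤ sSup T := le_csSup hbdd hmem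
    have h2 : ψ m - ψ x ≤ sSup T * (m - x) := by
      rw [div_le_iff₀ (by linarith)] at h1; linarith
    nlinarith
  · simp [h]
  · have h1 : sSup T ≤ (ψ x - ψ m) / (x - m) := csSup_le hne (hub x h)
    have h2 : sSup T * (x - m) ≤ ψ x - ψ m := by
      rw [le_div_iff₀ (by linarith)] at h1; linarith
    linarith

/-- A convex function on `Ici 0` is a.e. strongly measurable w.r.t. a measure
supported on the positive reals (no atom at 0). -/
lemma convex_aesm {ψ : ℝ → ℝ} (hψ : ConvexOn ℝ (Ici (0:ℝ)) ψ) {μ : Measure ℝ}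
    (h0 : μ {0} = 0) (hpos : ∀ᵐ x ∂μ, 0 ≤ x) : AEStronglyMeasurable ψ μ := by
  have hmem : ∀ᵐ x ∂μ, x ∈ Ioi (0:ℝ) := by
    have hne : ∀ᵐ x ∂μ, x ≠ 0 := by
      rw [ae_iff]
      simpa using h0
    filter_upwards [hpos, hne] with x h1 h2
    exact lt_of_le_of_ne h1 (Ne.symm h2)
  have hres : μ.restrict (Ioi 0) = μ := Measure.restrict_eq_self_of_ae_mem hmem
  have hcont : ContinuousOn ψ (Ioi 0) := by
    have := hψ.continuousOn_interior
    rwa [interior_Ici] at this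
  rw [← hres]
  exact hcont.aestronglyMeasurable measurableSet_Ioi

/-- Linear growth + measurability + finite first moment ⟹ integrable. -/
lemma lin_integrable {ψ : ℝ → ℝ} (hg : LinGrowth ψ) {μ : Measure ℝ} [IsFiniteMeasure μ]
    (hmeas : AEStronglyMeasurable ψ μ) (hpos : ∀ᵐ x ∂μ, 0 ≤ x)
    (hint : Integrable id μ) : Integrable ψ μ := by
  obtain ⟨C, hC⟩ := hg
  refine Integrable.mono' ((integrable_const C).add (hint.const_mul C)) hmeas ?_
  filter_upwards [hpos] with x hx
  have h := hC x hx
  simp only [Real.norm_eq_abs, id]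
  calc |ψ x| ≤ C * (1 + x) := h
    _ = C + C * x := by ring
/-- digital option in a one-sided market. -/
theorem digital_one_sided_market (μa : Measure ℝ) (ha : IsP1 μa) [NullSingletonClass μa]
    (x₀ K L : ℝ) (hmean : ∫ x, x ∂μa = x₀) (hK : x₀ < K)
    (hL0 : 0 ≤ L) (hLK : L < K)
    (hcrit : ∫ x in Ici L, (x - K) ∂μa = 0) :
    (CvxOrder (Measure.dirac x₀)
        (μa.restrict (Iic L) + μa (Ici L) • Measure.dirac K) ∧
      CvxOrder (μa.restrict (Iic L) + μa (Ici L) • Measure.dirac K) μa) ∧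
    (∀ x ≥ (0:ℝ), Set.indicator (Ici K) (fun _ => (1:ℝ)) x ≤ max (x - L) 0 / (K - L)) ∧
    sSup {r : ℝ | ∃ μ : Measure ℝ, IsP1 μ ∧ CvxOrder μ μa ∧ r = (μ (Ici K)).toReal}
      = ∫ x, max (x - L) 0 / (K - L) ∂μa ∧
    ∫ x, max (x - L) 0 / (K - L) ∂μa = (μa (Ici L)).toReal := by
  obtain ⟨hprob, hpos, hint⟩ := ha
  have hid : Integrable (fun x : ℝ => x) μa := hint
  set ν := μa.restrict (Iic L) + μa (Ici L) • Measure.dirac K with hν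
  set a := (μa (Ici L)).toReal with haa
  have hKL : (0:ℝ) < K - L := by linarith
  -- positivity of the mean
  have hx₀0 : 0 ≤ x₀ := hmean ▸ integral_nonneg_of_ae hpos
  have hK0 : 0 < K := lt_of_le_of_lt hx₀0 hK
  have hx₀pos : 0 < x₀ := by
    rcases hx₀0.lt_or_eq with h | h
    · exact h
    · exfalso
      have h0 : ∫ x, x ∂μa = 0 := by rw [hmean, ← h]
      have hz : (fun x : ℝ => x) =ᵐ[μa] 0 :=
        (integral_eq_zero_iff_of_nonneg_ae hpos hid).mp h0
      have hc : μa {(0:ℝ)}ᶜ = 0 := by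
        have : {x : ℝ | ¬ (fun x : ℝ => x) x = (0 : ℝ → ℝ) x} = {(0:ℝ)}ᶜ := by
          ext x; simp
        have := hz
        rw [Filter.EventuallyEq, ae_iff] at this
        rwa [‹{x : ℝ | ¬ (fun x : ℝ => x) x = (0 : ℝ → ℝ) x} = {(0:ℝ)}ᶜ›] at this
      have h1 : μa {(0:ℝ)} = 0 := measure_singleton 0
      have huniv : μa univ = 1 := measure_univ
      have : μa univ ≤ μa {(0:ℝ)} + μa {(0:ℝ)}ᶜ := by
        rw [← union_compl_self {(0:ℝ)}] ; exact measure_union_le _ _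
      rw [huniv, h1, hc] at this
      simp at this
  -- measure bookkeeping
  have hfin : μa (Ici L) ≠ ∞ := measure_ne_top _ _
  have hIoiIci : μa.restrict (Ioi L) = μa.restrict (Ici L) :=
    Measure.restrict_congr_set Ioi_ae_eq_Ici
  have hsplit_meas : μa (Iic L) + μa (Ici L) = 1 := by
    have h1 := measure_add_measure_compl (μ := μa) (measurableSet_Iic (a := L))
    rw [compl_Iic] at h1
    have h2 : μa (Ioi L) = μa (Ici L) := measure_congr Ioi_ae_eq_Ici
    rw [h2] at h1
    rw [h1]; exact measure_univ
  have hsplit : ∀ f : ℝ → ℝ, Integrable f μa →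
      ∫ x in Iic L, f x ∂μa + ∫ x in Ici L, f x ∂μa = ∫ x, f x ∂μa := by
    intro f hf
    have h1 := integral_add_compl (measurableSet_Iic (a := L)) hf
    rw [compl_Iic] at h1
    rw [← h1, hIoiIci]
  -- first moment identities
  have hXm : ∫ x in Ici L, x ∂μa = K * a := by
    have h1 : ∫ x in Ici L, (x - K) ∂μa
        = ∫ x in Ici L, x ∂μa - ∫ x in Ici L, (K:ℝ) ∂μa :=
      integral_sub hid.restrict (integrable_const K)
    rw [hcrit] at h1
    rw [integral_const, measureReal_restrict_apply_univ, Measure.real] at h1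
    simp only [smul_eq_mul] at h1
    linarith [h1]
  have hIicXm : ∫ x in Iic L, x ∂μa = x₀ - K * a := by
    have := hsplit (fun x => x) hid
    rw [hXm, hmean] at this
    linarith
  -- facts about ν
  have hν_univ : ν univ = 1 := by
    rw [hν]
    simp only [Measure.add_apply, Measure.smul_apply, Measure.restrict_apply_univ,
      Measure.dirac_apply_of_mem (mem_univ K), smul_eq_mul, mul_one]
    exact hsplit_meas
  have hνprob : IsProbabilityMeasure ν := ⟨hν_univ⟩
  haveI := hνprob
  have hνpos : ∀ᵐ x ∂ν, 0 ≤ x := by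
    rw [ae_iff]
    have hset : {x : ℝ | ¬ 0 ≤ x} = Iio 0 := by ext x; simp
    rw [hset, hν]
    simp only [Measure.add_apply, Measure.smul_apply]
    have h1 : μa.restrict (Iic L) (Iio 0) = 0 := by
      have hμa0 : μa (Iio 0) = 0 := by
        have := hpos; rw [ae_iff] at this
        rwa [hset] at this
      exact le_antisymm ((Measure.restrict_le_self _).trans_eq hμa0) zero_le
    have h2 : Measure.dirac K (Iio 0) = 0 := by
      rw [Measure.dirac_apply' _ measurableSet_Iio]
      have hKmem : K ∉ Iio (0:ℝ) := by simp [not_lt.mpr hK0.le]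
      simp [indicator_of_notMem hKmem]
    rw [h1, h2]; simp
  have hνid : Integrable (fun x : ℝ => x) ν := by
    rw [hν]
    exact hid.restrict.add_measure
      (((integrable_const K).congr (ae_eq_dirac (fun x : ℝ => x)).symm).smul_measure hfin)
  have hνint : ∀ f : ℝ → ℝ, Integrable f (μa.restrict (Iic L)) →
      ∫ x, f x ∂ν = ∫ x in Iic L, f x ∂μa + a * f K := by
    intro f hf1
    have hf2 : Integrable f ((μa (Ici L)) • Measure.dirac K) :=
      ((integrable_const (f K)).congr (ae_eq_dirac f).symm).smul_measure hfin
    rw [hν, integral_add_measure hf1 hf2, integral_smul_measure, integral_dirac]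
    simp [smul_eq_mul, haa]
  have hmeanν : ∫ x, x ∂ν = x₀ := by
    rw [hνint (fun x => x) hid.restrict, hIicXm]; ring
  -- the call-spread payoff
  set ψL : ℝ → ℝ := fun x => max (x - L) 0 / (K - L) with hψL
  have hψLcvx : ConvexOn ℝ (Ici (0:ℝ)) ψL := by
    have h1 : ConvexOn ℝ (Ici (0:ℝ)) (fun x => x - L) := by
      have := ConvexOn.add_const (convexOn_id (convex_Ici (0:ℝ)) : ConvexOn ℝ (Ici (0:ℝ)) id) (-L)
      have he : (id + fun _ : ℝ => -L) = fun x : ℝ => x - L := by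
        funext x; simp [sub_eq_add_neg]
      rwa [he] at this
    have h2 : ConvexOn ℝ (Ici (0:ℝ)) (fun x => max (x - L) 0) := by
      have := h1.sup (convexOn_const (0:ℝ) (convex_Ici 0))
      have he : ((fun x : ℝ => x - L) ⊔ fun _ => (0:ℝ)) = fun x : ℝ => max (x - L) 0 := by
        funext x; simp [Pi.sup_apply]
      rwa [he] at this
    have := ConvexOn.smul (𝕜 := ℝ) (c := (K - L)⁻¹) (by positivity) h2
    have he : (fun x : ℝ => (K - L)⁻¹ • max (x - L) 0) = ψL := by
      funext x; simp [hψL, smul_eq_mul, div_eq_inv_mul]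
    rwa [he] at this
  have hψLgrow : LinGrowth ψL := by
    refine ⟨(1 + |L|) / (K - L), fun x hx => ?_⟩
    have h1 : |ψL x| = max (x - L) 0 / (K - L) := by
      rw [hψL, abs_div, abs_of_nonneg (le_max_right (x - L) 0), abs_of_pos hKL]
    rw [h1]
    have h2 : max (x - L) 0 ≤ (1 + |L|) * (1 + x) := by
      have hLabs : -|L| ≤ L := neg_abs_le L
      have h3 : x - L ≤ (1 + |L|) * (1 + x) := by nlinarith [abs_nonneg L]
      have h4 : (0:ℝ) ≤ (1 + |L|) * (1 + x) := by positivity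
      exact max_le h3 h4
    calc max (x - L) 0 / (K - L) ≤ ((1 + |L|) * (1 + x)) / (K - L) :=
          (div_le_div_iff_of_pos_right hKL).mpr h2
      _ = (1 + |L|) / (K - L) * (1 + x) := by ring

  -- part (ii)
  have part2 : ∀ x ≥ (0:ℝ), Set.indicator (Ici K) (fun _ => (1:ℝ)) x ≤ max (x - L) 0 / (K - L) := by
    intro x hx
    by_cases hxK : x ∈ Ici K
    · rw [indicator_of_mem hxK]
      have h1 : K - L ≤ max (x - L) 0 := le_max_of_le_left (by simpa using (mem_Ici.mp hxK) : K - L ≤ x - L)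
      rw [le_div_iff₀ hKL]
      linarith
    · rw [indicator_of_notMem hxK]
      exact div_nonneg (le_max_right _ _) hKL.le
  -- part (iv) : value of the call spread under μa
  have hmaxcont : Continuous (fun x : ℝ => max (x - L) 0) :=
    (continuous_id.sub continuous_const).max continuous_const
  have hmaxint : Integrable (fun x : ℝ => max (x - L) 0) μa := by
    refine Integrable.mono' (g := fun x => |x| + |L|) (hint.abs.add (integrable_const _))
      hmaxcont.aestronglyMeasurable ?_
    filter_upwards with x
    rw [Real.norm_eq_abs, abs_of_nonneg (le_max_right _ _)]
    rcases le_or_gt (x - L) 0 with h | h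
    · rw [max_eq_right h]; positivity
    · rw [max_eq_left h.le]
      have := abs_nonneg x
      have := neg_abs_le x
      have := neg_abs_le L
      linarith [le_abs_self x, neg_abs_le L]
  have hIicmax : ∫ x in Iic L, max (x - L) 0 ∂μa = 0 := by
    apply integral_eq_zero_of_ae
    filter_upwards [ae_restrict_mem (measurableSet_Iic (a := L))] with x hx
    exact max_eq_right (by simpa using hx)
  have hIcimax : ∫ x in Ici L, max (x - L) 0 ∂μa = (K - L) * a := by
    have he : (fun x : ℝ => max (x - L) 0) =ᵐ[μa.restrict (Ici L)] fun x => x - L := by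
      filter_upwards [ae_restrict_mem (measurableSet_Ici (a := L))] with x hx
      exact max_eq_left (by simpa using hx)
    rw [integral_congr_ae he, integral_sub hid.restrict (integrable_const L),
      integral_const, measureReal_restrict_apply_univ, Measure.real, hXm]
    simp only [smul_eq_mul, haa]
    ring
  have part4 : ∫ x, max (x - L) 0 / (K - L) ∂μa = a := by
    rw [integral_div]
    have h1 : ∫ x, max (x - L) 0 ∂μa = (K - L) * a := by
      rw [← hsplit _ hmaxint, hIicmax, hIcimax, zero_add]
    rw [h1]
    field_simp
  -- convex integrability machinery
  have hψint : ∀ ψ : ℝ → ℝ, ConvexOn ℝ (Ici (0:ℝ)) ψ → LinGrowth ψ → Integrable ψ μa :=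
    fun ψ hc hg => lin_integrable hg (convex_aesm hc (measure_singleton 0) hpos) hpos hint
  -- part (i).1 : dirac x₀ ≼c ν
  have part1a : CvxOrder (Measure.dirac x₀) ν := by
    intro ψ hcvx hgrow
    rw [integral_dirac]
    obtain ⟨c, hc⟩ := subgrad hcvx hx₀pos
    have hψμa : Integrable ψ μa := hψint ψ hcvx hgrow
    have hψres : Integrable ψ (μa.restrict (Iic L)) := hψμa.restrict
    have hψν : Integrable ψ ν := by
      rw [hν]
      exact hψres.add_measure
        (((integrable_const (ψ K)).congr (ae_eq_dirac ψ).symm).smul_measure hfin)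
    have hlin : Integrable (fun x => c * (x - x₀)) ν :=
      (hνid.sub (integrable_const x₀)).const_mul c
    have haff : Integrable (fun x => ψ x₀ + c * (x - x₀)) ν :=
      (integrable_const _).add hlin
    have hmono : ∫ x, ψ x₀ + c * (x - x₀) ∂ν ≤ ∫ x, ψ x ∂ν := by
      refine integral_mono_ae haff hψν ?_
      filter_upwards [hνpos] with x hx
      exact hc x hx
    have hval : ∫ x, ψ x₀ + c * (x - x₀) ∂ν = ψ x₀ := by
      rw [integral_add (integrable_const _) hlin, integral_const,
        integral_const_mul, integral_sub hνid (integrable_const x₀),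
        integral_const, hmeanν]
      simp [measure_univ]
    linarith
  -- part (i).2 : ν ≼c μa
  have part1b : CvxOrder ν μa := by
    intro ψ hcvx hgrow
    obtain ⟨c, hc⟩ := subgrad hcvx hK0
    have hψμa : Integrable ψ μa := hψint ψ hcvx hgrow
    have hψIci : Integrable ψ (μa.restrict (Ici L)) := hψμa.restrict
    have hlin : Integrable (fun x => c * (x - K)) (μa.restrict (Ici L)) :=
      (hid.restrict.sub (integrable_const K)).const_mul c
    have key : a * ψ K ≤ ∫ x in Ici L, ψ x ∂μa := by
      have hmono : ∫ x in Ici L, (ψ K + c * (x - K)) ∂μa ≤ ∫ x in Ici L, ψ x ∂μa := by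
        refine integral_mono_ae ((integrable_const _).add hlin) hψIci ?_
        filter_upwards [ae_restrict_mem (measurableSet_Ici (a := L))] with x hx
        exact hc x (hL0.trans hx)
      have hval : ∫ x in Ici L, (ψ K + c * (x - K)) ∂μa = a * ψ K := by
        rw [integral_add (integrable_const _) hlin, integral_const,
          integral_const_mul, integral_sub hid.restrict (integrable_const K),
          integral_const, measureReal_restrict_apply_univ, Measure.real, hXm]
        simp only [smul_eq_mul, haa]
        ring
      linarith
    have hsum := hsplit ψ hψμa
    rw [hνint ψ hψμa.restrict]
    linarith
  -- ν gives mass a to Ici K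
  have hνIciK : (ν (Ici K)).toReal = a := by
    have h1 : μa.restrict (Iic L) (Ici K) = 0 := by
      rw [Measure.restrict_apply measurableSet_Ici]
      have : Ici K ∩ Iic L = ∅ := by
        ext x; simp only [mem_inter_iff, mem_Ici, mem_Iic, mem_empty_iff_false, iff_false]
        rintro ⟨h1, h2⟩; linarith
      rw [this]; exact measure_empty
    have h2 : Measure.dirac K (Ici K) = 1 := Measure.dirac_apply_of_mem (mem_Ici.mpr le_rfl)
    rw [hν]
    simp [Measure.add_apply, Measure.smul_apply, h1, h2, smul_eq_mul, haa]
  -- part (iii) : the supremum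
  have part3 : sSup {r : ℝ | ∃ μ : Measure ℝ, IsP1 μ ∧ CvxOrder μ μa ∧ r = (μ (Ici K)).toReal}
      = ∫ x, max (x - L) 0 / (K - L) ∂μa := by
    have hub : ∀ r ∈ {r : ℝ | ∃ μ : Measure ℝ, IsP1 μ ∧ CvxOrder μ μa ∧ r = (μ (Ici K)).toReal},
        r ≤ ∫ x, max (x - L) 0 / (K - L) ∂μa := by
      rintro r ⟨μ, ⟨hμprob, hμpos, hμint⟩, hμco, rfl⟩
      haveI := hμprob
      have hψLcont : Continuous ψL := hmaxcont.div_const _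
      have hψLint : Integrable ψL μ :=
        lin_integrable hψLgrow hψLcont.aestronglyMeasurable hμpos hμint
      have hindint : Integrable (Set.indicator (Ici K) (fun _ => (1:ℝ))) μ :=
        (integrable_const (1:ℝ)).indicator measurableSet_Ici
      have h1 : (μ (Ici K)).toReal = ∫ x, Set.indicator (Ici K) (fun _ => (1:ℝ)) x ∂μ := by
        rw [integral_indicator_const (1:ℝ) measurableSet_Ici]; simp; rfl
      have h2 : ∫ x, Set.indicator (Ici K) (fun _ => (1:ℝ)) x ∂μ ≤ ∫ x, ψL x ∂μ := by
        refine integral_mono_ae hindint hψLint ?_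
        filter_upwards [hμpos] with x hx
        exact part2 x hx
      have h3 : ∫ x, ψL x ∂μ ≤ ∫ x, ψL x ∂μa := hμco ψL hψLcvx hψLgrow
      calc (μ (Ici K)).toReal = _ := h1
        _ ≤ ∫ x, ψL x ∂μ := h2
        _ ≤ ∫ x, ψL x ∂μa := h3
    have hmem : (∫ x, max (x - L) 0 / (K - L) ∂μa) ∈
        {r : ℝ | ∃ μ : Measure ℝ, IsP1 μ ∧ CvxOrder μ μa ∧ r = (μ (Ici K)).toReal} :=
      ⟨ν, ⟨hνprob, hνpos, hνid⟩, part1b, by rw [hνIciK, part4]⟩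
    exact le_antisymm (csSup_le ⟨_, hmem⟩ hub) (le_csSup ⟨_, hub⟩ hmem)
  exact ⟨⟨part1a, part1b⟩, part2, part3, by rw [part4]⟩
end
end

section
/- Square-root convergence rate for bounded-variation payoffs: if μᵇ ≼c μᵃ, the mid-marginal μᵐ = (μᵇ+μᵃ)/2 admits a density bounded by M > 0, and h : ℝ₊ → ℝ is upper semicontinuous with linear growth and bounded variation V(h) < ∞, then 0 ≤ P(h) − μᵐ(h) ≤ √(2M) · V(h) · √(d(μᵇ,μᵃ)), where P(h) = sup_{μᵇ ≼c μ ≼c μᵃ} μ(h). -/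
open MeasureTheory Set Filter Topology
open scoped NNReal ENNReal

noncomputable section

/-- Primal BAMOT value for a single maturity. -/
def Pval (μb μa : Measure ℝ) (h : ℝ → ℝ) : ℝ :=
  sSup {r : ℝ | ∃ μ : Measure ℝ, IsP1 μ ∧ CvxOrder μb μ ∧ CvxOrder μ μa ∧
    r = ∫ x, h x ∂μ}

namespace Bamot

variable {μ ν μb μa : Measure ℝ}

/-- integrability from a linear-growth bound on the support. -/
lemma integrable_of_linbound (hμ : IsP1 μ) {f : ℝ → ℝ} (hm : AEStronglyMeasurable f μ)
    {C : ℝ} (hf : ∀ x ≥ (0:ℝ), |f x| ≤ C * (1 + x)) : Integrable f μ := by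
  have : IsProbabilityMeasure μ := hμ.1
  refine Integrable.mono' ((integrable_const |C|).add (hμ.2.2.const_mul |C|)) hm ?_
  filter_upwards [hμ.2.1] with x hx
  calc ‖f x‖ = |f x| := rfl
    _ ≤ C * (1 + x) := hf x hx
    _ ≤ |C| * (1 + x) := by
        apply mul_le_mul_of_nonneg_right (le_abs_self C) (by linarith)
    _ = |C| + |C| * x := by ring
    _ = |C| + |C| * (id x) := rfl

lemma aesm_of_continuousOn (hμ : IsP1 μ) {f : ℝ → ℝ} (hf : ContinuousOn f (Ici (0:ℝ))) :
    AEStronglyMeasurable f μ := by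
  have hc : Continuous (fun x : ℝ => f (max x 0)) :=
    hf.comp_continuous (continuous_id.max continuous_const) (fun x => mem_Ici.2 (le_max_right _ _))
  refine hc.aestronglyMeasurable.congr ?_
  filter_upwards [hμ.2.1] with x hx
  rw [max_eq_left hx]

lemma lipsOn_linGrowth {ψ : ℝ → ℝ} (hL : LipschitzOnWith 1 ψ (Ici (0:ℝ))) :
    ∀ x ≥ (0:ℝ), |ψ x| ≤ (|ψ 0| + 1) * (1 + x) := by
  intro x hx
  have h1 : |ψ x - ψ 0| ≤ |x - 0| := by
    have := hL.dist_le_mul x hx 0 Set.self_mem_Ici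
    simpa [Real.dist_eq] using this
  have : |ψ x| ≤ |ψ 0| + x := by
    have := abs_sub_abs_le_abs_sub (ψ x) (ψ 0)
    rw [sub_zero] at h1
    rw [abs_of_nonneg hx] at h1
    linarith
  nlinarith [abs_nonneg (ψ 0)]

lemma integrable_of_lipsOn (hμ : IsP1 μ) {ψ : ℝ → ℝ} (hL : LipschitzOnWith 1 ψ (Ici (0:ℝ))) :
    Integrable ψ μ :=
  integrable_of_linbound hμ (aesm_of_continuousOn hμ hL.continuousOn) (lipsOn_linGrowth hL)

lemma lipsOn_lin_growth' {ψ : ℝ → ℝ} (hL : LipschitzOnWith 1 ψ (Ici (0:ℝ))) : LinGrowth ψ :=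
  ⟨|ψ 0| + 1, lipsOn_linGrowth hL⟩

/-- measurability for convex functions on the half line. -/
lemma aesm_of_convexOn (hμ : IsP1 μ) {ψ : ℝ → ℝ} (hc : ConvexOn ℝ (Ici (0:ℝ)) ψ) :
    AEStronglyMeasurable ψ μ := by
  have hcont : ContinuousOn ψ (Ioi (0:ℝ)) := by
    have := hc.continuousOn_interior
    rwa [interior_Ici] at this
  have h1 : AEStronglyMeasurable ψ (μ.restrict (Ioi 0)) :=
    hcont.aestronglyMeasurable measurableSet_Ioi
  have h2 : AEStronglyMeasurable ψ (μ.restrict {0}) := by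
    refine aestronglyMeasurable_const.congr (f := fun _ => ψ 0) ?_
    filter_upwards [ae_restrict_mem (measurableSet_singleton (0:ℝ))] with x hx
    simp only [mem_singleton_iff] at hx
    rw [hx]
  have h3 : AEStronglyMeasurable ψ (μ.restrict (Ici 0)) := by
    have : Ici (0:ℝ) = {0} ∪ Ioi 0 := by
      ext x; simp [le_iff_lt_or_eq, mem_Ici, or_comm, eq_comm]
    rw [this]
    exact (aestronglyMeasurable_union_iff).2 ⟨h2, h1⟩
  rwa [Measure.restrict_eq_self_of_ae_mem] at h3
  · exact hμ.2.1

lemma integrable_of_convex (hμ : IsP1 μ) {ψ : ℝ → ℝ} (hc : ConvexOn ℝ (Ici (0:ℝ)) ψ)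
    (hg : LinGrowth ψ) : Integrable ψ μ := by
  obtain ⟨C, hC⟩ := hg
  exact integrable_of_linbound hμ (aesm_of_convexOn hμ hc) hC

-- BEGIN CHUNK 2
lemma dirDist_bddAbove (hμ : IsP1 μ) (hν : IsP1 ν) :
    BddAbove {r : ℝ | ∃ ψ : ℝ → ℝ, ConvexOn ℝ (Ici (0:ℝ)) ψ ∧
      LipschitzOnWith 1 ψ (Ici (0:ℝ)) ∧ r = ∫ x, ψ x ∂μ - ∫ x, ψ x ∂ν} := by
  have hpμ : IsProbabilityMeasure μ := hμ.1
  have hpν : IsProbabilityMeasure ν := hν.1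
  refine ⟨∫ x, x ∂μ + ∫ x, x ∂ν, ?_⟩
  rintro r ⟨ψ, hc, hL, rfl⟩
  have key : ∀ (κ : Measure ℝ), IsP1 κ → |∫ x, ψ x ∂κ - ψ 0| ≤ ∫ x, x ∂κ := by
    intro κ hκ
    have : IsProbabilityMeasure κ := hκ.1
    have hint : Integrable ψ κ := integrable_of_lipsOn hκ hL
    have h0 : ∫ x, ψ x ∂κ - ψ 0 = ∫ x, (ψ x - ψ 0) ∂κ := by
      rw [integral_sub hint (integrable_const _), integral_const]
      simp
    rw [h0]
    calc |∫ x, (ψ x - ψ 0) ∂κ| ≤ ∫ x, |ψ x - ψ 0| ∂κ := by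
          simpa [Real.norm_eq_abs] using
            norm_integral_le_integral_norm (μ := κ) (f := fun x => ψ x - ψ 0)
      _ ≤ ∫ x, x ∂κ := by
          apply integral_mono_ae (hint.sub (integrable_const _)).abs hκ.2.2
          filter_upwards [hκ.2.1] with x hx
          have := hL.dist_le_mul x hx 0 Set.self_mem_Ici
          simpa [Real.dist_eq, abs_of_nonneg hx] using this
  have hμ' := key μ hμ
  have hν' := key ν hν
  have : ∫ x, ψ x ∂μ - ∫ x, ψ x ∂ν = (∫ x, ψ x ∂μ - ψ 0) - (∫ x, ψ x ∂ν - ψ 0) := by ring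
  rw [this]
  have := abs_le.1 hμ'
  have := abs_le.1 hν'
  linarith [(abs_le.1 hμ').2, (abs_le.1 hν').1]

lemma le_dirDist (hμ : IsP1 μ) (hν : IsP1 ν) {ψ : ℝ → ℝ} (hc : ConvexOn ℝ (Ici (0:ℝ)) ψ)
    (hL : LipschitzOnWith 1 ψ (Ici (0:ℝ))) :
    ∫ x, ψ x ∂μ - ∫ x, ψ x ∂ν ≤ dirDist μ ν :=
  le_csSup (dirDist_bddAbove hμ hν) ⟨ψ, hc, hL, rfl⟩

lemma dirDist_nonneg (hμ : IsP1 μ) (hν : IsP1 ν) : 0 ≤ dirDist μ ν := by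
  have hlip : LipschitzOnWith 1 (fun _ : ℝ => (0:ℝ)) (Ici 0) := fun x _ y _ => by simp
  have := le_dirDist hμ hν (ψ := fun _ => (0:ℝ)) (convexOn_const 0 (convex_Ici 0)) hlip
  simpa using this

-- mid measure
lemma mid_eq : (2:ℝ≥0)⁻¹ • μ + (2:ℝ≥0)⁻¹ • ν = (2:ℝ≥0∞)⁻¹ • μ + (2:ℝ≥0∞)⁻¹ • ν := by
  have hc : (((2:ℝ≥0)⁻¹ : ℝ≥0) : ℝ≥0∞) = (2:ℝ≥0∞)⁻¹ := by
    rw [ENNReal.coe_inv two_ne_zero]; norm_num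
  ext s hs
  simp only [Measure.coe_add, Pi.add_apply, Measure.coe_nnreal_smul_apply,
    Measure.smul_apply, ENNReal.smul_def, smul_eq_mul, hc]
lemma isProb_mid (hb : IsP1 μ) (ha : IsP1 ν) :
    IsProbabilityMeasure ((2:ℝ≥0)⁻¹ • μ + (2:ℝ≥0)⁻¹ • ν) := by
  constructor
  have h1 : μ univ = 1 := hb.1.measure_univ
  have h2 : ν univ = 1 := ha.1.measure_univ
  rw [mid_eq]
  simp [h1, h2]
  exact ENNReal.inv_two_add_inv_two

lemma integrable_mid {f : ℝ → ℝ} (hfb : Integrable f μ) (hfa : Integrable f ν) :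
    Integrable f ((2:ℝ≥0)⁻¹ • μ + (2:ℝ≥0)⁻¹ • ν) := by
  rw [mid_eq]
  refine Integrable.add_measure ?_ ?_
  · exact hfb.smul_measure (by simp)
  · exact hfa.smul_measure (by simp)

lemma integral_mid {f : ℝ → ℝ} (hfb : Integrable f μ) (hfa : Integrable f ν) :
    ∫ x, f x ∂((2:ℝ≥0)⁻¹ • μ + (2:ℝ≥0)⁻¹ • ν) = (∫ x, f x ∂μ + ∫ x, f x ∂ν) / 2 := by
  rw [mid_eq,
    integral_add_measure (hfb.smul_measure (by simp)) (hfa.smul_measure (by simp)),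
    integral_smul_measure, integral_smul_measure]
  simp only [ENNReal.toReal_inv, ENNReal.toReal_ofNat, smul_eq_mul]
  ring

lemma isP1_mid (hb : IsP1 μ) (ha : IsP1 ν) : IsP1 ((2:ℝ≥0)⁻¹ • μ + (2:ℝ≥0)⁻¹ • ν) := by
  refine ⟨isProb_mid hb ha, ?_, ?_⟩
  · rw [mid_eq, ae_add_measure_iff]
    exact ⟨Measure.ae_smul_measure hb.2.1 _, Measure.ae_smul_measure ha.2.1 _⟩
  · exact integrable_mid hb.2.2 ha.2.2

lemma mean_eq (hb : IsP1 μ) (ha : IsP1 ν) (hord : CvxOrder μ ν) :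
    ∫ x, x ∂μ = ∫ x, x ∂ν := by
  have h1 : ∫ x, x ∂μ ≤ ∫ x, x ∂ν := by
    have := hord (fun x => x) (convexOn_id (convex_Ici 0))
      ⟨1, fun x hx => by rw [abs_of_nonneg hx]; linarith⟩
    exact this
  have h2 : ∫ x, (-x) ∂μ ≤ ∫ x, (-x) ∂ν := by
    refine hord (fun x => -x) ?_ ⟨1, fun x hx => by rw [abs_neg, abs_of_nonneg hx]; linarith⟩
    exact (concaveOn_id (convex_Ici 0)).neg
  rw [integral_neg, integral_neg, neg_le_neg_iff] at h2
  linarith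

lemma cvx_mid_left (hb : IsP1 μ) (ha : IsP1 ν) (hord : CvxOrder μ ν) :
    CvxOrder μ ((2:ℝ≥0)⁻¹ • μ + (2:ℝ≥0)⁻¹ • ν) := by
  intro ψ hc hg
  rw [integral_mid (integrable_of_convex hb hc hg) (integrable_of_convex ha hc hg)]
  have := hord ψ hc hg
  linarith

lemma cvx_mid_right (hb : IsP1 μ) (ha : IsP1 ν) (hord : CvxOrder μ ν) :
    CvxOrder ((2:ℝ≥0)⁻¹ • μ + (2:ℝ≥0)⁻¹ • ν) ν := by
  intro ψ hc hg
  rw [integral_mid (integrable_of_convex hb hc hg) (integrable_of_convex ha hc hg)]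
  have := hord ψ hc hg
  linarith

-- CHUNK 3
/-- the call payoff function -/
def hockey (K : ℝ) : ℝ → ℝ := fun x => max (x - K) 0

/-- the call price function -/
def callFn (μ : Measure ℝ) (K : ℝ) : ℝ := ∫ x, max (x - K) 0 ∂μ

lemma hockey_lips (K : ℝ) : LipschitzWith 1 (hockey K) := by
  refine LipschitzWith.of_dist_le_mul (fun x y => ?_)
  simp only [hockey, Real.dist_eq, one_mul]
  have := abs_max_sub_max_le_abs (x - K) (y - K) 0
  calc |max (x - K) 0 - max (y - K) 0| ≤ |x - K - (y - K)| := this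
    _ = |x - y| := by ring_nf
    _ ≤ ((1:ℝ≥0) : ℝ) * |x - y| := by rw [NNReal.coe_one, one_mul]

lemma hockey_convex (K : ℝ) : ConvexOn ℝ (Ici (0:ℝ)) (hockey K) := by
  have h1 : ConvexOn ℝ univ (fun x : ℝ => x - K) :=
    (convexOn_id convex_univ).sub (concaveOn_const K convex_univ)
  have h2 : ConvexOn ℝ univ (fun _ : ℝ => (0:ℝ)) := convexOn_const 0 convex_univ
  exact (h1.sup h2).subset (subset_univ _) (convex_Ici 0)

lemma hockey_linGrowth (K : ℝ) : LinGrowth (hockey K) :=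
  lipsOn_lin_growth' ((hockey_lips K).lipschitzOnWith (s := Ici (0:ℝ)))

lemma call_integrable (hμ : IsP1 μ) (K : ℝ) : Integrable (fun x => max (x - K) 0) μ :=
  integrable_of_lipsOn hμ ((hockey_lips K).lipschitzOnWith (s := Ici (0:ℝ)))

/-- absolute-value test function -/
lemma absK_lips (K : ℝ) : LipschitzWith 1 (fun x : ℝ => |x - K|) := by
  refine LipschitzWith.of_dist_le_mul (fun x y => ?_)
  simp only [Real.dist_eq, one_mul]
  calc abs (|x - K| - |y - K|) ≤ |x - K - (y - K)| := abs_abs_sub_abs_le_abs_sub _ _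
    _ = |x - y| := by ring_nf
    _ ≤ ((1:ℝ≥0) : ℝ) * |x - y| := by rw [NNReal.coe_one, one_mul]

lemma absK_convex (K : ℝ) : ConvexOn ℝ (Ici (0:ℝ)) (fun x : ℝ => |x - K|) := by
  refine ⟨convex_Ici 0, fun x _ y _ a b ha hb hab => ?_⟩
  simp only [smul_eq_mul]
  have heq : a * x + b * y - K = a * (x - K) + b * (y - K) := by
    linear_combination K * hab
  show |a * x + b * y - K| ≤ a * |x - K| + b * |y - K|
  rw [heq]
  calc |a * (x - K) + b * (y - K)| ≤ |a * (x - K)| + |b * (y - K)| := abs_add_le _ _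
    _ = a * |x - K| + b * |y - K| := by
        rw [abs_mul, abs_mul, abs_of_nonneg ha, abs_of_nonneg hb]

lemma abs_integral_eq (hμ : IsP1 μ) (K : ℝ) :
    ∫ x, |x - K| ∂μ = 2 * callFn μ K - ∫ x, x ∂μ + K := by
  have : IsProbabilityMeasure μ := hμ.1
  have hpt : ∀ x : ℝ, |x - K| = 2 * max (x - K) 0 - x + K := by
    intro x
    rcases le_total x K with hx | hx
    · rw [abs_of_nonpos (by linarith), max_eq_right (by linarith)]; ring
    · rw [abs_of_nonneg (by linarith), max_eq_left (by linarith)]; ring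
  have hid : Integrable (fun x : ℝ => x) μ := hμ.2.2
  have i1 : Integrable (fun x : ℝ => 2 * max (x - K) 0 - x) μ :=
    ((call_integrable hμ K).const_mul 2).sub hid
  rw [show (fun x : ℝ => |x - K|) = fun x => (2 * max (x - K) 0 - x) + K from funext hpt]
  rw [integral_add i1 (integrable_const K),
    integral_sub ((call_integrable hμ K).const_mul 2) hid,
    integral_const_mul, integral_const]
  simp [callFn]

lemma call_le_call (hb : IsP1 μ) (ha : IsP1 ν) (hord : CvxOrder μ ν) (K : ℝ) :
    callFn μ K ≤ callFn ν K :=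
  hord (hockey K) (hockey_convex K) (hockey_linGrowth K)

lemma call_gap (hb : IsP1 μb) (ha : IsP1 μa) (hord : CvxOrder μb μa) (K : ℝ) :
    callFn μa K - callFn μb K ≤ baDist μb μa := by
  have h1 : ∫ x, |x - K| ∂μa - ∫ x, |x - K| ∂μb ≤ dirDist μa μb :=
    le_dirDist ha hb (absK_convex K) ((absK_lips K).lipschitzOnWith (s := Ici (0:ℝ)))
  rw [abs_integral_eq ha K, abs_integral_eq hb K, mean_eq hb ha hord] at h1
  have h2 : 0 ≤ dirDist μb μa := dirDist_nonneg hb ha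
  unfold baDist
  linarith

lemma call_mid (hb : IsP1 μb) (ha : IsP1 μa) (K : ℝ) :
    callFn ((2:ℝ≥0)⁻¹ • μb + (2:ℝ≥0)⁻¹ • μa) K = (callFn μb K + callFn μa K) / 2 :=
  integral_mid (call_integrable hb K) (call_integrable ha K)

lemma call_close (hb : IsP1 μb) (ha : IsP1 μa) (hord : CvxOrder μb μa)
    (hμ : IsP1 μ) (h1 : CvxOrder μb μ) (h2 : CvxOrder μ μa) (K : ℝ) :
    |callFn μ K - callFn ((2:ℝ≥0)⁻¹ • μb + (2:ℝ≥0)⁻¹ • μa) K| ≤ baDist μb μa / 2 := by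
  rw [call_mid hb ha K]
  have hbμ := call_le_call hb hμ h1 K
  have hμa := call_le_call hμ ha h2 K
  have hgap := call_gap hb ha hord K
  rw [abs_le]
  constructor <;> [skip; skip] <;> linarith

lemma measurable_measIci (μ : Measure ℝ) : Measurable (fun s => μ (Ici s)) := by
  have : Antitone (fun s => μ (Ici s)) := fun s t hst => measure_mono (Ici_subset_Ici.2 hst)
  exact this.measurable

lemma call_diff (hμ : IsP1 μ) {K L : ℝ} (hKL : K ≤ L) :
    callFn μ K - callFn μ L = ∫ s in Ioc K L, (μ (Ici s)).toReal := by
  have hprob : IsProbabilityMeasure μ := hμ.1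
  set g : ℝ → ℝ := fun x => max (x - K) 0 - max (x - L) 0 with hg
  have hgnn : ∀ x, 0 ≤ g x := by
    intro x
    simp only [hg, sub_nonneg]
    exact max_le_max (by linarith) le_rfl
  have hgcont : Continuous g := by
    apply Continuous.sub <;>
      exact ((continuous_id.sub continuous_const).max continuous_const)
  -- pointwise identity
  have hpt : ∀ x, ENNReal.ofReal (g x) = volume (Ioc K L ∩ Iic x) := by
    intro x
    have hset : Ioc K L ∩ Iic x = Ioc K (min L x) := by
      ext s; simp only [mem_inter_iff, mem_Ioc, mem_Iic, le_min_iff]; tauto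
    rw [hset, Real.volume_Ioc]
    rcases le_total x K with hx | hx
    · have hgx : g x = 0 := by
        simp only [hg, max_eq_right (by linarith : x - K ≤ 0),
          max_eq_right (by linarith : x - L ≤ 0)]
        ring
      have hmin : min L x - K ≤ 0 := by
        have : min L x ≤ x := min_le_right _ _
        linarith
      rw [hgx, ENNReal.ofReal_zero, eq_comm, ENNReal.ofReal_eq_zero]
      exact hmin
    · congr 1
      rcases le_total x L with h' | h'
      · simp only [hg, min_eq_right h', max_eq_left (by linarith : (0:ℝ) ≤ x - K),
          max_eq_right (by linarith : x - L ≤ 0)]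
        ring
      · simp only [hg, min_eq_left h', max_eq_left (by linarith : (0:ℝ) ≤ x - K),
          max_eq_left (by linarith : (0:ℝ) ≤ x - L)]
        ring
  -- LHS as lintegral
  have h1 : callFn μ K - callFn μ L = ∫ x, g x ∂μ :=
    (integral_sub (call_integrable hμ K) (call_integrable hμ L)).symm
  have h2 : ∫ x, g x ∂μ = (∫⁻ x, ENNReal.ofReal (g x) ∂μ).toReal :=
    integral_eq_lintegral_of_nonneg_ae (Eventually.of_forall hgnn)
      hgcont.aestronglyMeasurable
  -- Fubini
  have hFset : MeasurableSet {p : ℝ × ℝ | p.2 ∈ Ioc K L ∧ p.2 ≤ p.1} := by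
    apply MeasurableSet.inter
    · exact measurable_snd measurableSet_Ioc
    · exact measurableSet_le measurable_snd measurable_fst
  have h3 : ∫⁻ x, ENNReal.ofReal (g x) ∂μ = ∫⁻ s in Ioc K L, μ (Ici s) ∂volume := by
    have hF : ∀ x, ENNReal.ofReal (g x)
        = ∫⁻ s, {p : ℝ × ℝ | p.2 ∈ Ioc K L ∧ p.2 ≤ p.1}.indicator
            (fun _ => (1:ℝ≥0∞)) (x, s) ∂volume := by
      intro x
      rw [hpt x]
      have : ∀ s, {p : ℝ × ℝ | p.2 ∈ Ioc K L ∧ p.2 ≤ p.1}.indicator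
          (fun _ => (1:ℝ≥0∞)) (x, s) = (Ioc K L ∩ Iic x).indicator (fun _ => 1) s := by
        intro s
        by_cases hs : s ∈ Ioc K L ∩ Iic x
        · rw [indicator_of_mem hs, indicator_of_mem]
          exact ⟨hs.1, hs.2⟩
        · rw [indicator_of_notMem hs, indicator_of_notMem]
          intro hmem
          exact hs ⟨hmem.1, hmem.2⟩
      simp_rw [this]
      exact (lintegral_indicator_one ((measurableSet_Ioc).inter measurableSet_Iic)).symm
    simp_rw [hF]
    have hm : Measurable (Function.uncurry fun x s : ℝ =>
        ({p : ℝ × ℝ | p.2 ∈ Ioc K L ∧ p.2 ≤ p.1}.indicator (fun _ => (1:ℝ≥0∞)) (x, s))) := by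
      have huc : (Function.uncurry fun x s : ℝ =>
          ({p : ℝ × ℝ | p.2 ∈ Ioc K L ∧ p.2 ≤ p.1}.indicator (fun _ => (1:ℝ≥0∞)) (x, s)))
          = {p : ℝ × ℝ | p.2 ∈ Ioc K L ∧ p.2 ≤ p.1}.indicator (fun _ => (1:ℝ≥0∞)) := by
        funext p
        simp [Function.uncurry]
      rw [huc]
      exact (measurable_indicator_const_iff 1).2 hFset
    rw [lintegral_lintegral_swap hm.aemeasurable]
    have hinner : ∀ s : ℝ, (∫⁻ x, {p : ℝ × ℝ | p.2 ∈ Ioc K L ∧ p.2 ≤ p.1}.indicator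
        (fun _ => (1:ℝ≥0∞)) (x, s) ∂μ) = (Ioc K L).indicator (fun s => μ (Ici s)) s := by
      intro s
      by_cases hs : s ∈ Ioc K L
      · rw [indicator_of_mem hs]
        have hx : ∀ x, {p : ℝ × ℝ | p.2 ∈ Ioc K L ∧ p.2 ≤ p.1}.indicator
            (fun _ => (1:ℝ≥0∞)) (x, s) = (Ici s).indicator (fun _ => 1) x := by
          intro x
          by_cases hxs : s ≤ x <;>
            simp [Set.indicator_apply, mem_setOf_eq, mem_Ici, mem_Ioc.1 hs, hxs]
        simp_rw [hx]
        exact lintegral_indicator_one measurableSet_Ici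
      · rw [indicator_of_notMem hs]
        have hx : ∀ x, {p : ℝ × ℝ | p.2 ∈ Ioc K L ∧ p.2 ≤ p.1}.indicator
            (fun _ => (1:ℝ≥0∞)) (x, s) = 0 := by
          intro x
          exact indicator_of_notMem (fun hmem => hs hmem.1) _
        simp_rw [hx]
        exact lintegral_zero
    simp_rw [hinner]
    exact lintegral_indicator measurableSet_Ioc _
  have h4 : ∫ s in Ioc K L, (μ (Ici s)).toReal = (∫⁻ s in Ioc K L, μ (Ici s)).toReal := by
    rw [integral_toReal]
    · exact (measurable_measIci μ).aemeasurable.restrict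
    · filter_upwards with s
      exact measure_lt_top μ _
  rw [h1, h2, h3, h4]
-- CHUNK 5
lemma measIci_toReal_le_one (μ : Measure ℝ) [IsProbabilityMeasure μ] (s : ℝ) :
    (μ (Ici s)).toReal ≤ 1 := by
  rw [show (1:ℝ) = (1:ℝ≥0∞).toReal by simp]
  exact ENNReal.toReal_mono ENNReal.one_ne_top prob_le_one

lemma integrableOn_measIci (μ : Measure ℝ) [IsProbabilityMeasure μ] {A : Set ℝ}
    (hA : volume A ≠ ⊤) : IntegrableOn (fun s => (μ (Ici s)).toReal) A volume := by
  refine Integrable.mono' ((integrableOn_const (C := (1:ℝ)) hA))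
    ((measurable_measIci μ).ennreal_toReal.aestronglyMeasurable.restrict) ?_
  filter_upwards with s
  rw [Real.norm_eq_abs, abs_of_nonneg ENNReal.toReal_nonneg]
  exact measIci_toReal_le_one μ s

lemma Ici_diff_eq (μ : Measure ℝ) [IsProbabilityMeasure μ] {s t : ℝ} (hst : s ≤ t) :
    (μ (Ici s)).toReal - (μ (Ici t)).toReal = (μ (Ico s t)).toReal := by
  have hd : Disjoint (Ico s t) (Ici t) := by
    rw [Set.disjoint_left]
    rintro x ⟨_, hx2⟩ hx3
    exact absurd hx3 (not_le.2 hx2)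
  have hu : Ico s t ∪ Ici t = Ici s := Ico_union_Ici_eq_Ici hst
  have : μ (Ici s) = μ (Ico s t) + μ (Ici t) := by
    rw [← hu, measure_union hd measurableSet_Ici]
  rw [this, ENNReal.toReal_add (measure_ne_top μ _) (measure_ne_top μ _)]
  ring

lemma antitone_measIci (μ : Measure ℝ) [IsProbabilityMeasure μ] :
    Antitone (fun s => (μ (Ici s)).toReal) := by
  intro s t hst
  exact ENNReal.toReal_mono (measure_ne_top μ _) (measure_mono (Ici_subset_Ici.2 hst))

/-- Lipschitz property of the mid CDF coming from the density bound. -/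
lemma mid_Ico_le {M : ℝ} (hM : 0 < M) {φm : ℝ → ℝ≥0∞}
    (hφbd : ∀ x, φm x ≤ ENNReal.ofReal M)
    (hdens : (2:ℝ≥0)⁻¹ • μb + (2:ℝ≥0)⁻¹ • μa = volume.withDensity φm)
    {s t : ℝ} (hst : s ≤ t) :
    (((2:ℝ≥0)⁻¹ • μb + (2:ℝ≥0)⁻¹ • μa) (Ico s t)).toReal ≤ M * (t - s) := by
  rw [hdens, withDensity_apply _ measurableSet_Ico]
  have h1 : ∫⁻ x in Ico s t, φm x ∂volume ≤ ENNReal.ofReal M * volume (Ico s t) := by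
    calc ∫⁻ x in Ico s t, φm x ∂volume ≤ ∫⁻ _ in Ico s t, ENNReal.ofReal M ∂volume :=
          lintegral_mono (fun x => hφbd x)
      _ = ENNReal.ofReal M * volume (Ico s t) := by rw [setLIntegral_const]
  have h2 : ENNReal.ofReal M * volume (Ico s t) = ENNReal.ofReal (M * (t - s)) := by
    rw [Real.volume_Ico, ← ENNReal.ofReal_mul hM.le]
  calc (∫⁻ x in Ico s t, φm x ∂volume).toReal
      ≤ (ENNReal.ofReal (M * (t - s))).toReal := by
        refine ENNReal.toReal_mono ENNReal.ofReal_ne_top ?_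
        rw [← h2]; exact h1
    _ = M * (t - s) := ENNReal.toReal_ofReal (by nlinarith)

/-- The key CDF estimate. -/
lemma cdf_est {M δ : ℝ} (hM : 0 < M) (hδ : 0 ≤ δ) {φm : ℝ → ℝ≥0∞}
    (hφbd : ∀ x, φm x ≤ ENNReal.ofReal M)
    (hdens : (2:ℝ≥0)⁻¹ • μb + (2:ℝ≥0)⁻¹ • μa = volume.withDensity φm)
    (hμ : IsP1 μ) (hμm : IsP1 ((2:ℝ≥0)⁻¹ • μb + (2:ℝ≥0)⁻¹ • μa))
    (hclose : ∀ K : ℝ, |callFn μ K - callFn ((2:ℝ≥0)⁻¹ • μb + (2:ℝ≥0)⁻¹ • μa) K| ≤ δ / 2)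
    (t : ℝ) :
    |(μ (Ici t)).toReal - (((2:ℝ≥0)⁻¹ • μb + (2:ℝ≥0)⁻¹ • μa) (Ici t)).toReal|
      ≤ Real.sqrt (2 * M * δ) := by
  set μm := (2:ℝ≥0)⁻¹ • μb + (2:ℝ≥0)⁻¹ • μa with hμmdef
  have hpμ : IsProbabilityMeasure μ := hμ.1
  have hpm : IsProbabilityMeasure μm := hμm.1
  set a : ℝ → ℝ := fun s => (μ (Ici s)).toReal with ha
  set b : ℝ → ℝ := fun s => (μm (Ici s)).toReal with hb
  -- generic: from ε² ≤ 2Mδ conclude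
  have hconc : ∀ ε : ℝ, 0 ≤ ε → ε ^ 2 ≤ 2 * M * δ → ε ≤ Real.sqrt (2 * M * δ) := by
    intro ε hε h2
    calc ε = Real.sqrt (ε ^ 2) := (Real.sqrt_sq hε).symm
      _ ≤ Real.sqrt (2 * M * δ) := Real.sqrt_le_sqrt h2
  have key : ∀ ε : ℝ, 0 < ε → (b t - a t = ε ∨ a t - b t = ε) → ε ^ 2 ≤ 2 * M * δ := by
    intro ε hε hcase
    set r : ℝ := ε / M with hr
    have hrpos : 0 < r := div_pos hε hM
    have main : ε * r ≤ δ + M * r ^ 2 / 2 := by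
      rcases hcase with hcase | hcase
      · -- b t - a t = ε : look right of t
        have hptw : ∀ s ∈ Ioc t (t + r), a s ≤ b s + (M * (s - t) - ε) := by
          intro s hs
          have h1 : a s ≤ a t := antitone_measIci μ hs.1.le
          have h2 : b t - b s = (μm (Ico t s)).toReal := Ici_diff_eq μm hs.1.le
          have h3 : (μm (Ico t s)).toReal ≤ M * (s - t) := mid_Ico_le hM hφbd hdens hs.1.le
          have h4 : a t = b t - ε := by linarith
          linarith
        have ig : IntegrableOn (fun s : ℝ => M * (s - t) - ε) (Ioc t (t + r)) volume :=
          (((continuous_const.mul (continuous_id.sub continuous_const)).sub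
            continuous_const)).integrableOn_Ioc
        have ib : IntegrableOn b (Ioc t (t + r)) volume := integrableOn_measIci μm (by simp)
        have hint : ∫ s in Ioc t (t + r), a s ≤
            ∫ s in Ioc t (t + r), (b s + (M * (s - t) - ε)) := by
          refine setIntegral_mono_on (integrableOn_measIci μ (by simp)) ?_
            measurableSet_Ioc hptw
          exact ib.add ig
        have e1 : ∫ s in Ioc t (t + r), a s = callFn μ t - callFn μ (t + r) :=
          (call_diff hμ (by linarith)).symm
        have e2 : ∫ s in Ioc t (t + r), b s = callFn μm t - callFn μm (t + r) :=
          (call_diff hμm (by linarith)).symm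
        have hsum : ∫ s in Ioc t (t + r), (b s + (M * (s - t) - ε)) =
            (∫ s in Ioc t (t + r), b s) + ∫ s in Ioc t (t + r), (M * (s - t) - ε) :=
          integral_add ib ig
        have hlin : ∫ s in Ioc t (t + r), (M * (s - t) - ε) = M * r ^ 2 / 2 - ε * r := by
          rw [← intervalIntegral.integral_of_le (by linarith : t ≤ t + r)]
          have hsub : ∫ s in t..(t + r), (M * (s - t) - ε) =
              (∫ s in t..(t + r), M * (s - t)) - ∫ _ in t..(t + r), ε :=
            intervalIntegral.integral_sub
              (((continuous_const.mul (continuous_id.sub continuous_const))).intervalIntegrable _ _)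
              (intervalIntegrable_const : IntervalIntegrable (fun _ => ε) volume t (t + r))
          rw [hsub, intervalIntegral.integral_const]
          have hM2 : ∫ s in t..(t + r), M * (s - t) = M * (r ^ 2 / 2) := by
            rw [intervalIntegral.integral_const_mul]
            have h5 : ∫ s in t..(t + r), (s - t) = ∫ u in (0:ℝ)..r, u := by
              have := intervalIntegral.integral_comp_sub_right (a := t) (b := t + r)
                (fun u => u) t
              simpa using this
            rw [h5, integral_id]
            ring_nf
          rw [hM2]
          simp only [smul_eq_mul]
          ring_nf
        have e3 : ∫ s in Ioc t (t + r), (b s + (M * (s - t) - ε)) =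
            (callFn μm t - callFn μm (t + r)) + (M * r ^ 2 / 2 - ε * r) := by
          rw [hsum, e2, hlin]
        have hc1 := abs_le.1 (hclose t)
        have hc2 := abs_le.1 (hclose (t + r))
        rw [e1, e3] at hint
        linarith [hc1.1, hc1.2, hc2.1, hc2.2, hint]
      · -- a t - b t = ε : look left of t
        have hptw : ∀ s ∈ Ioc (t - r) t, b s - M * (t - s) + ε ≤ a s := by
          intro s hs
          have h1 : a t ≤ a s := antitone_measIci μ hs.2
          have h2 : b s - b t = (μm (Ico s t)).toReal := Ici_diff_eq μm hs.2
          have h3 : (μm (Ico s t)).toReal ≤ M * (t - s) := mid_Ico_le hM hφbd hdens hs.2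
          have h4 : a t = b t + ε := by linarith
          linarith
        have ig : IntegrableOn (fun s : ℝ => ε - M * (t - s)) (Ioc (t - r) t) volume :=
          ((continuous_const.sub
            (continuous_const.mul (continuous_const.sub continuous_id)))).integrableOn_Ioc
        have ib : IntegrableOn b (Ioc (t - r) t) volume := integrableOn_measIci μm (by simp)
        have hptw' : ∀ s ∈ Ioc (t - r) t, b s + (ε - M * (t - s)) ≤ a s := by
          intro s hs
          have := hptw s hs
          linarith
        have hint : ∫ s in Ioc (t - r) t, (b s + (ε - M * (t - s))) ≤
            ∫ s in Ioc (t - r) t, a s := by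
          refine setIntegral_mono_on ?_ (integrableOn_measIci μ (by simp))
            measurableSet_Ioc hptw'
          exact ib.add ig
        have e1 : ∫ s in Ioc (t - r) t, a s = callFn μ (t - r) - callFn μ t :=
          (call_diff hμ (by linarith)).symm
        have e2 : ∫ s in Ioc (t - r) t, b s = callFn μm (t - r) - callFn μm t :=
          (call_diff hμm (by linarith)).symm
        have hsum : ∫ s in Ioc (t - r) t, (b s + (ε - M * (t - s))) =
            (∫ s in Ioc (t - r) t, b s) + ∫ s in Ioc (t - r) t, (ε - M * (t - s)) :=
          integral_add ib ig
        have hlin : ∫ s in Ioc (t - r) t, (ε - M * (t - s)) = ε * r - M * r ^ 2 / 2 := by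
          rw [← intervalIntegral.integral_of_le (by linarith : t - r ≤ t)]
          have hsub : ∫ s in (t - r)..t, (ε - M * (t - s)) =
              (∫ _ in (t - r)..t, ε) - ∫ s in (t - r)..t, M * (t - s) :=
            intervalIntegral.integral_sub
              (intervalIntegrable_const : IntervalIntegrable (fun _ => ε) volume (t - r) t)
              (((continuous_const.mul (continuous_const.sub continuous_id))).intervalIntegrable _ _)
          rw [hsub, intervalIntegral.integral_const]
          have hM2 : ∫ s in (t - r)..t, M * (t - s) = M * (r ^ 2 / 2) := by
            rw [intervalIntegral.integral_const_mul]
            have h5 : ∫ s in (t - r)..t, (t - s) = ∫ u in (0:ℝ)..r, u := by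
              have h6 := intervalIntegral.integral_comp_sub_left (a := t - r) (b := t)
                (fun u => u) t
              simpa using h6
            rw [h5, integral_id]
            ring_nf
          rw [hM2]
          simp only [smul_eq_mul]
          ring_nf
        have e3 : ∫ s in Ioc (t - r) t, (b s + (ε - M * (t - s))) =
            (callFn μm (t - r) - callFn μm t) + (ε * r - M * r ^ 2 / 2) := by
          rw [hsum, e2, hlin]
        have hc1 := abs_le.1 (hclose (t - r))
        have hc2 := abs_le.1 (hclose t)
        rw [e1, e3] at hint
        linarith [hc1.1, hc1.2, hc2.1, hc2.2, hint]
    -- from main with r = ε / M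
    have hM' : M ≠ 0 := ne_of_gt hM
    have heq : M * r = ε := by rw [hr]; field_simp
    have h1 : ε * r = M * r ^ 2 := by rw [← heq]; ring
    have h2 : M * r ^ 2 ≤ 2 * δ := by nlinarith [main, h1]
    have h3 : ε ^ 2 = M * (M * r ^ 2) := by rw [← heq]; ring
    rw [h3]
    calc M * (M * r ^ 2) ≤ M * (2 * δ) := mul_le_mul_of_nonneg_left h2 hM.le
      _ = 2 * M * δ := by ring
  show |a t - b t| ≤ Real.sqrt (2 * M * δ)
  rcases le_total (a t) (b t) with hab | hab
  · rcases eq_or_lt_of_le hab with heq | hlt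
    · rw [heq]
      simpa using Real.sqrt_nonneg (2 * M * δ)
    · have hk := key (b t - a t) (by linarith) (Or.inl rfl)
      have h2 := hconc (b t - a t) (by linarith) hk
      rw [abs_of_nonpos (by linarith)]
      linarith
  · have heps : 0 ≤ a t - b t := by linarith
    rcases eq_or_lt_of_le heps with heq | hlt
    · rw [← heq]
      simpa using Real.sqrt_nonneg (2 * M * δ)
    · have hk := key (a t - b t) hlt (Or.inr rfl)
      have h2 := hconc (a t - b t) (by linarith) hk
      rw [abs_of_nonneg heps]
      linarith
-- CHUNK 6 : CDF bounds on other set shapes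
lemma iio_bound [IsProbabilityMeasure μ] [IsProbabilityMeasure ν] {s₀ : ℝ}
    (hF : ∀ t, |(μ (Ici t)).toReal - (ν (Ici t)).toReal| ≤ s₀) (t : ℝ) :
    |(μ (Iio t)).toReal - (ν (Iio t)).toReal| ≤ s₀ := by
  have key : ∀ κ : Measure ℝ, IsProbabilityMeasure κ →
      (κ (Iio t)).toReal = 1 - (κ (Ici t)).toReal := by
    intro κ hκ
    have h1 : κ (Iio t) + κ (Ici t) = 1 := by
      have := measure_add_measure_compl (μ := κ) (measurableSet_Iio (a := t))
      rwa [compl_Iio, measure_univ] at this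
    have h2 : (κ (Iio t)).toReal + (κ (Ici t)).toReal = 1 := by
      rw [← ENNReal.toReal_add (measure_ne_top κ _) (measure_ne_top κ _), h1]
      simp
    linarith
  rw [key μ ‹_›, key ν ‹_›]
  rw [show (1 - (μ (Ici t)).toReal) - (1 - (ν (Ici t)).toReal)
    = -((μ (Ici t)).toReal - (ν (Ici t)).toReal) by ring, abs_neg]
  exact hF t

lemma ioi_bound [IsProbabilityMeasure μ] [IsProbabilityMeasure ν] {s₀ : ℝ}
    (hF : ∀ t, |(μ (Ici t)).toReal - (ν (Ici t)).toReal| ≤ s₀) (t : ℝ) :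
    |(μ (Ioi t)).toReal - (ν (Ioi t)).toReal| ≤ s₀ := by
  have hset : ⋃ n : ℕ, Ici (t + 1 / (n + 1)) = Ioi t := by
    ext x
    simp only [mem_iUnion, mem_Ici, mem_Ioi]
    constructor
    · rintro ⟨n, hn⟩
      have hpos : (0:ℝ) < 1 / ((n:ℝ) + 1) := by positivity
      linarith
    · intro hx
      rcases exists_nat_one_div_lt (by linarith : (0:ℝ) < x - t) with ⟨m, hm⟩
      exact ⟨m, by push_cast at hm ⊢; linarith⟩
  have hmono : Monotone (fun n : ℕ => Ici (t + 1 / (n + 1))) := by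
    intro n m hnm
    apply Ici_subset_Ici.2
    have hc : (n:ℝ) ≤ (m:ℝ) := Nat.cast_le.2 hnm
    have h1 : (1:ℝ) / (m + 1) ≤ 1 / (n + 1) := by
      apply one_div_le_one_div_of_le (by positivity)
      linarith
    linarith
  have hlim : ∀ κ : Measure ℝ, IsProbabilityMeasure κ →
      Tendsto (fun n : ℕ => (κ (Ici (t + 1 / (n + 1)))).toReal) atTop
        (𝓝 ((κ (Ioi t)).toReal)) := by
    intro κ hκ
    have h1 : Tendsto (fun n : ℕ => κ (Ici (t + 1 / (n + 1)))) atTop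
        (𝓝 (κ (⋃ n : ℕ, Ici (t + 1 / (n + 1))))) :=
      tendsto_measure_iUnion_atTop hmono
    rw [hset] at h1
    exact (ENNReal.tendsto_toReal (measure_ne_top κ _)).comp h1
  have hd : Tendsto (fun n : ℕ => |(μ (Ici (t + 1 / (n + 1)))).toReal
      - (ν (Ici (t + 1 / (n + 1)))).toReal|) atTop
      (𝓝 |(μ (Ioi t)).toReal - (ν (Ioi t)).toReal|) :=
    ((hlim μ ‹_›).sub (hlim ν ‹_›)).abs
  exact le_of_tendsto hd (Eventually.of_forall (fun n => hF _))

/-- difference of measures of an upper set. -/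
lemma upper_set_bound [IsProbabilityMeasure μ] [IsProbabilityMeasure ν] {s₀ : ℝ}
    (hs₀ : 0 ≤ s₀)
    (hF : ∀ t, |(μ (Ici t)).toReal - (ν (Ici t)).toReal| ≤ s₀)
    {S : Set ℝ} (hup : ∀ x ∈ S, ∀ y, x ≤ y → y ∈ S) :
    (μ S).toReal - (ν S).toReal ≤ s₀ := by
  rcases eq_empty_or_nonempty S with rfl | hne
  · simpa using hs₀
  by_cases hbdd : BddBelow S
  · set x₀ := sInf S with hx₀def
    by_cases hx₀ : x₀ ∈ S
    · have hS : S = Ici x₀ := by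
        apply Subset.antisymm
        · exact fun s hs => csInf_le hbdd hs
        · exact fun y hy => hup x₀ hx₀ y hy
      rw [hS]
      exact (abs_le.1 (hF x₀)).2
    · have hS : S = Ioi x₀ := by
        ext y
        constructor
        · intro hy
          rcases lt_or_eq_of_le (csInf_le hbdd hy) with h | h
          · exact h
          · refine absurd ?_ hx₀
            show x₀ ∈ S
            rw [hx₀def, h]
            exact hy
        · intro hy
          rcases exists_lt_of_csInf_lt hne hy with ⟨s, hsS, hsy⟩
          exact hup s hsS y hsy.le
      rw [hS]
      exact (abs_le.1 (ioi_bound hF x₀)).2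
  · have hS : S = univ := by
      apply eq_univ_of_forall
      intro y
      rcases not_bddBelow_iff.1 hbdd y with ⟨s, hsS, hsy⟩
      exact hup s hsS y hsy.le
    rw [hS]
    simp [measure_univ]
    exact hs₀

/-- layer-cake comparison for bounded monotone nonnegative payoffs -/
lemma layer_cake_comp (μ ν : Measure ℝ) [IsProbabilityMeasure μ] [IsProbabilityMeasure ν]
    {s₀ : ℝ} (hs₀ : 0 ≤ s₀)
    (hF : ∀ t, |(μ (Ici t)).toReal - (ν (Ici t)).toReal| ≤ s₀)
    {g : ℝ → ℝ} (hg : Monotone g) {B : ℝ} (h0 : ∀ x, 0 ≤ g x) (hB : ∀ x, g x ≤ B) :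
    ∫ x, g x ∂μ - ∫ x, g x ∂ν ≤ B * s₀ := by
  have hBnn : 0 ≤ B := le_trans (h0 0) (hB 0)
  have hint : ∀ κ : Measure ℝ, IsProbabilityMeasure κ → Integrable g κ := by
    intro κ hκ
    refine Integrable.mono' (integrable_const B) hg.measurable.aestronglyMeasurable ?_
    filter_upwards with x
    rw [Real.norm_eq_abs, abs_of_nonneg (h0 x)]
    exact hB x
  -- layer cake representation
  rw [(hint μ ‹_›).integral_eq_integral_meas_lt (Eventually.of_forall h0),
    (hint ν ‹_›).integral_eq_integral_meas_lt (Eventually.of_forall h0)]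
  -- integrands
  set f1 : ℝ → ℝ := fun t => (μ {a | t < g a}).toReal with hf1
  set f2 : ℝ → ℝ := fun t => (ν {a | t < g a}).toReal with hf2
  have hmeas : ∀ κ : Measure ℝ, IsProbabilityMeasure κ →
      Measurable (fun t => (κ {a | t < g a}).toReal) := by
    intro κ hκ
    have : Antitone (fun t => (κ {a | t < g a}).toReal) := by
      intro s t hst
      refine ENNReal.toReal_mono (measure_ne_top κ _) (measure_mono ?_)
      exact fun a ha => lt_of_le_of_lt hst ha
    exact this.measurable
  have hzero : ∀ κ : Measure ℝ, ∀ t, B < t → (κ {a | t < g a}).toReal = 0 := by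
    intro κ t ht
    have : {a : ℝ | t < g a} = ∅ := by
      apply eq_empty_iff_forall_notMem.2
      intro a ha
      simp only [mem_setOf_eq] at ha
      linarith [hB a]
    rw [this]
    simp
  have hone : ∀ (κ : Measure ℝ), IsProbabilityMeasure κ →
      ∀ t, (κ {a | t < g a}).toReal ≤ 1 := by
    intro κ hκ t
    rw [show (1:ℝ) = (1:ℝ≥0∞).toReal by simp]
    exact ENNReal.toReal_mono ENNReal.one_ne_top prob_le_one
  -- integrability of the layers
  have hind : Integrable ((Ioc (0:ℝ) B).indicator (fun _ => (1:ℝ)))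
      (volume.restrict (Ioi 0)) := by
    rw [integrable_indicator_iff measurableSet_Ioc]
    refine integrableOn_const (C := (1:ℝ)) (ne_of_lt ?_)
    calc (volume.restrict (Ioi 0)) (Ioc 0 B) ≤ volume (Ioc 0 B) :=
          Measure.restrict_apply_le _ _
      _ < ⊤ := measure_Ioc_lt_top
  have hintOn : ∀ κ : Measure ℝ, IsProbabilityMeasure κ →
      IntegrableOn (fun t => (κ {a | t < g a}).toReal) (Ioi 0) volume := by
    intro κ hκ
    refine Integrable.mono' hind ((hmeas κ hκ).aestronglyMeasurable.restrict) ?_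
    rw [ae_restrict_iff' measurableSet_Ioi]
    filter_upwards with t ht
    rw [Real.norm_eq_abs, abs_of_nonneg ENNReal.toReal_nonneg]
    by_cases htB : t ≤ B
    · rw [indicator_of_mem (mem_Ioc.2 ⟨mem_Ioi.1 ht, htB⟩)]
      exact hone κ hκ t
    · rw [hzero κ t (not_le.1 htB)]
      rw [indicator_of_notMem (fun hmem => htB hmem.2)]
  -- pointwise comparison
  have hptw : ∀ t ∈ Ioi (0:ℝ), f1 t - f2 t ≤ (Ioc (0:ℝ) B).indicator (fun _ => s₀) t := by
    intro t ht
    by_cases htB : t ≤ B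
    · rw [indicator_of_mem (mem_Ioc.2 ⟨mem_Ioi.1 ht, htB⟩)]
      refine upper_set_bound hs₀ hF ?_
      exact fun x hx y hxy => lt_of_lt_of_le hx (hg hxy)
    · rw [indicator_of_notMem (fun hmem => htB hmem.2), hf1, hf2]
      simp only
      rw [hzero μ t (not_le.1 htB), hzero ν t (not_le.1 htB)]
      simp
  have hinds : Integrable ((Ioc (0:ℝ) B).indicator (fun _ => s₀))
      (volume.restrict (Ioi 0)) := by
    rw [integrable_indicator_iff measurableSet_Ioc]
    refine integrableOn_const (C := s₀) (ne_of_lt ?_)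
    calc (volume.restrict (Ioi 0)) (Ioc 0 B) ≤ volume (Ioc 0 B) :=
          Measure.restrict_apply_le _ _
      _ < ⊤ := measure_Ioc_lt_top
  calc (∫ t in Ioi 0, f1 t) - ∫ t in Ioi 0, f2 t
      = ∫ t in Ioi 0, (f1 t - f2 t) :=
        (integral_sub (hintOn μ ‹_›) (hintOn ν ‹_›)).symm
    _ ≤ ∫ t in Ioi 0, (Ioc (0:ℝ) B).indicator (fun _ => s₀) t :=
        setIntegral_mono_on ((hintOn μ ‹_›).sub (hintOn ν ‹_›)) hinds
          measurableSet_Ioi hptw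
    _ = B * s₀ := by
        rw [integral_indicator measurableSet_Ioc, setIntegral_const, measureReal_def,
          Measure.restrict_apply measurableSet_Ioc,
          show Ioc (0:ℝ) B ∩ Ioi 0 = Ioc 0 B from
            inter_eq_self_of_subset_left Ioc_subset_Ioi_self,
          Real.volume_Ioc, smul_eq_mul, ENNReal.toReal_ofReal (by linarith)]
        ring
-- CHUNK 7 : Jordan decomposition of a BV function on [0,∞)
lemma jordan_exists {h : ℝ → ℝ} (hbv : BoundedVariationOn h (Ici (0:ℝ))) :
    ∃ P N : ℝ → ℝ, Monotone P ∧ Monotone N ∧ (∀ x, 0 ≤ P x) ∧ (∀ x, 0 ≤ N x) ∧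
      (∀ x ∈ Ici (0:ℝ), h x = h 0 + P x - N x) ∧
      (∀ x y : ℝ, P x + N y ≤ (eVariationOn h (Ici (0:ℝ))).toReal) := by
  have hlbv : LocallyBoundedVariationOn h (Ici (0:ℝ)) := hbv.locallyBoundedVariationOn
  set v : ℝ → ℝ := fun y => variationOnFromTo h (Ici 0) 0 y with hv
  set V : ℝ := (eVariationOn h (Ici (0:ℝ))).toReal with hV
  have hvar : ∀ b ∈ Ici (0:ℝ), ∀ c ∈ Ici (0:ℝ), b ≤ c →
      |h c - h b| ≤ v c - v b := by
    intro b hb c hc hbc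
    have hadd : v b + variationOnFromTo h (Ici 0) b c = v c :=
      variationOnFromTo.add hlbv self_mem_Ici hb hc
    have h1 : |h c - h b| ≤ variationOnFromTo h (Ici 0) b c := by
      rw [variationOnFromTo.eq_of_le h (Ici 0) hbc]
      have h2 : edist (h b) (h c) ≤ eVariationOn h (Ici 0 ∩ Icc b c) :=
        eVariationOn.edist_le h ⟨hb, le_rfl, hbc⟩ ⟨hc, hbc, le_rfl⟩
      have h3 := ENNReal.toReal_mono (hlbv b c hb hc) h2
      rw [edist_dist, ENNReal.toReal_ofReal dist_nonneg] at h3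
      rw [Real.dist_eq, abs_sub_comm] at h3
      exact h3
    linarith
  have hv0 : v 0 = 0 := variationOnFromTo.self h (Ici 0) 0
  have hvle : ∀ y ∈ Ici (0:ℝ), v y ≤ V := by
    intro y hy
    show variationOnFromTo h (Ici 0) 0 y ≤ V
    rw [variationOnFromTo.eq_of_le h (Ici 0) hy, hV]
    exact ENNReal.toReal_mono hbv (eVariationOn.mono h inter_subset_left)
  refine ⟨fun x => (v (max x 0) + h (max x 0) - h 0) / 2,
    fun x => (v (max x 0) - h (max x 0) + h 0) / 2, ?_, ?_, ?_, ?_, ?_, ?_⟩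
  · intro x y hxy
    have hm : max x 0 ≤ max y 0 := max_le_max hxy le_rfl
    have := hvar (max x 0) (mem_Ici.2 (le_max_right _ _)) (max y 0) (mem_Ici.2 (le_max_right _ _)) hm
    have := abs_le.1 this
    simp only
    linarith [this.1, this.2]
  · intro x y hxy
    have hm : max x 0 ≤ max y 0 := max_le_max hxy le_rfl
    have := hvar (max x 0) (mem_Ici.2 (le_max_right _ _)) (max y 0) (mem_Ici.2 (le_max_right _ _)) hm
    have := abs_le.1 this
    simp only
    linarith [this.1, this.2]
  · intro x
    have := hvar 0 self_mem_Ici (max x 0) (mem_Ici.2 (le_max_right _ _)) (le_max_right _ _)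
    have := abs_le.1 this
    rw [hv0] at this
    simp only
    linarith [this.1, this.2]
  · intro x
    have := hvar 0 self_mem_Ici (max x 0) (mem_Ici.2 (le_max_right _ _)) (le_max_right _ _)
    have := abs_le.1 this
    rw [hv0] at this
    simp only
    linarith [this.1, this.2]
  · intro x hx
    simp only
    rw [max_eq_left hx]
    ring
  · intro x y
    -- P x + N y ≤ P z + N z with z = max x y, and P z + N z = v (max z 0) ≤ V
    set z := max x y with hz
    have hPmono : ∀ u w : ℝ, u ≤ w →
        (v (max u 0) + h (max u 0) - h 0) / 2 ≤ (v (max w 0) + h (max w 0) - h 0) / 2 := by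
      intro u w huw
      have hm : max u 0 ≤ max w 0 := max_le_max huw le_rfl
      have := abs_le.1 (hvar (max u 0) (mem_Ici.2 (le_max_right _ _)) (max w 0) (mem_Ici.2 (le_max_right _ _)) hm)
      linarith [this.1, this.2]
    have hNmono : ∀ u w : ℝ, u ≤ w →
        (v (max u 0) - h (max u 0) + h 0) / 2 ≤ (v (max w 0) - h (max w 0) + h 0) / 2 := by
      intro u w huw
      have hm : max u 0 ≤ max w 0 := max_le_max huw le_rfl
      have := abs_le.1 (hvar (max u 0) (mem_Ici.2 (le_max_right _ _)) (max w 0) (mem_Ici.2 (le_max_right _ _)) hm)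
      linarith [this.1, this.2]
    have h1 := hPmono x z (le_max_left _ _)
    have h2 := hNmono y z (le_max_right _ _)
    have h3 : v (max z 0) ≤ V := hvle _ (mem_Ici.2 (le_max_right _ _))
    simp only
    linarith

end Bamot

open Bamot in
/-- square-root convergence rate for bounded-variation payoffs. -/
theorem bamot_sqrt_rate (μb μa : Measure ℝ) (hb : IsP1 μb) (ha : IsP1 μa)
    (hord : CvxOrder μb μa) (M : ℝ) (hM : 0 < M)
    (φm : ℝ → ℝ≥0∞) (hφmeas : Measurable φm)
    (hφbd : ∀ x, φm x ≤ ENNReal.ofReal M)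
    (hdens : (2:ℝ≥0)⁻¹ • μb + (2:ℝ≥0)⁻¹ • μa = volume.withDensity φm)
    (h : ℝ → ℝ) (husc : UpperSemicontinuousOn h (Ici (0:ℝ))) (hg : LinGrowth h)
    (hbv : BoundedVariationOn h (Ici (0:ℝ))) :
    0 ≤ Pval μb μa h - ∫ x, h x ∂((2:ℝ≥0)⁻¹ • μb + (2:ℝ≥0)⁻¹ • μa) ∧
    Pval μb μa h - ∫ x, h x ∂((2:ℝ≥0)⁻¹ • μb + (2:ℝ≥0)⁻¹ • μa)
      ≤ Real.sqrt (2 * M) * (eVariationOn h (Ici (0:ℝ))).toReal *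
          Real.sqrt (baDist μb μa) := by
  classical
  set μm := (2:ℝ≥0)⁻¹ • μb + (2:ℝ≥0)⁻¹ • μa with hμmdef
  obtain ⟨P, N, hPmono, hNmono, hP0, hN0, hdec, hPN⟩ := jordan_exists hbv
  set V := (eVariationOn h (Ici (0:ℝ))).toReal with hVdef
  have hVnn : 0 ≤ V := ENNReal.toReal_nonneg
  set δ := baDist μb μa with hδdef
  have hδnn : 0 ≤ δ := by
    have h1 := dirDist_nonneg hb ha
    have h2 := dirDist_nonneg ha hb
    rw [hδdef]
    unfold baDist
    linarith
  set s₀ := Real.sqrt (2 * M * δ) with hs₀def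
  have hs₀nn : 0 ≤ s₀ := Real.sqrt_nonneg _
  have hμmP1 : IsP1 μm := isP1_mid hb ha
  -- suprema of the Jordan parts
  have hPle : ∀ x, P x ≤ V := fun x => by linarith [hPN x x, hN0 x]
  have hNle : ∀ x, N x ≤ V := fun x => by linarith [hPN x x, hP0 x]
  have hbP : BddAbove (range P) := ⟨V, by rintro _ ⟨x, rfl⟩; exact hPle x⟩
  have hbN : BddAbove (range N) := ⟨V, by rintro _ ⟨x, rfl⟩; exact hNle x⟩
  set Bp := ⨆ x, P x with hBp
  set Bn := ⨆ x, N x with hBn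
  have hPBp : ∀ x, P x ≤ Bp := fun x => le_ciSup hbP x
  have hNBn : ∀ x, N x ≤ Bn := fun x => le_ciSup hbN x
  have hBpBn : Bp + Bn ≤ V := by
    have h1 : Bp ≤ V - Bn := by
      apply ciSup_le
      intro x
      have h2 : Bn ≤ V - P x := ciSup_le (fun y => by linarith [hPN x y])
      linarith
    linarith
  -- integral splitting
  have hPint : ∀ κ : Measure ℝ, IsP1 κ → Integrable P κ := by
    intro κ hκ
    haveI := hκ.1
    refine Integrable.mono' (integrable_const V) hPmono.measurable.aestronglyMeasurable ?_
    filter_upwards with x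
    rw [Real.norm_eq_abs, abs_of_nonneg (hP0 x)]
    exact hPle x
  have hNint : ∀ κ : Measure ℝ, IsP1 κ → Integrable N κ := by
    intro κ hκ
    haveI := hκ.1
    refine Integrable.mono' (integrable_const V) hNmono.measurable.aestronglyMeasurable ?_
    filter_upwards with x
    rw [Real.norm_eq_abs, abs_of_nonneg (hN0 x)]
    exact hNle x
  have hsplit : ∀ κ : Measure ℝ, IsP1 κ →
      ∫ x, h x ∂κ = h 0 + (∫ x, P x ∂κ) - ∫ x, N x ∂κ := by
    intro κ hκ
    haveI := hκ.1
    have hae : h =ᵐ[κ] fun x => h 0 + P x - N x := by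
      filter_upwards [hκ.2.1] with x hx
      exact hdec x hx
    have e1 : ∫ x, (h 0 + P x - N x) ∂κ = (∫ x, (h 0 + P x) ∂κ) - ∫ x, N x ∂κ :=
      integral_sub ((integrable_const (h 0)).add (hPint κ hκ)) (hNint κ hκ)
    have e2 : ∫ x, (h 0 + P x) ∂κ = (∫ _, h 0 ∂κ) + ∫ x, P x ∂κ :=
      integral_add (integrable_const (h 0)) (hPint κ hκ)
    rw [integral_congr_ae hae, e1, e2, integral_const]
    simp [measure_univ]
  -- main per-admissible-measure bound
  have hmain : ∀ μ : Measure ℝ, IsP1 μ → CvxOrder μb μ → CvxOrder μ μa →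
      ∫ x, h x ∂μ ≤ (∫ x, h x ∂μm) + V * s₀ := by
    intro μ hμ h1 h2
    haveI := hμ.1
    haveI := hμmP1.1
    have hclose : ∀ K : ℝ, |callFn μ K - callFn μm K| ≤ δ / 2 :=
      fun K => call_close hb ha hord hμ h1 h2 K
    have hF : ∀ t, |(μ (Ici t)).toReal - (μm (Ici t)).toReal| ≤ s₀ :=
      fun t => cdf_est hM hδnn hφbd hdens hμ hμmP1 hclose t
    have hF' : ∀ t, |(μm (Ici t)).toReal - (μ (Ici t)).toReal| ≤ s₀ := by
      intro t
      rw [abs_sub_comm]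
      exact hF t
    have hcomp1 : ∫ x, P x ∂μ - ∫ x, P x ∂μm ≤ Bp * s₀ :=
      layer_cake_comp μ μm hs₀nn hF hPmono hP0 hPBp
    have hcomp2 : ∫ x, N x ∂μm - ∫ x, N x ∂μ ≤ Bn * s₀ :=
      layer_cake_comp μm μ hs₀nn hF' hNmono hN0 hNBn
    rw [hsplit μ hμ, hsplit μm hμmP1]
    have hmul : (Bp + Bn) * s₀ ≤ V * s₀ := mul_le_mul_of_nonneg_right hBpBn hs₀nn
    nlinarith [hcomp1, hcomp2, hmul]
  -- Pval estimates
  have hmem : (∫ x, h x ∂μm) ∈ {r : ℝ | ∃ μ : Measure ℝ, IsP1 μ ∧ CvxOrder μb μ ∧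
      CvxOrder μ μa ∧ r = ∫ x, h x ∂μ} :=
    ⟨μm, hμmP1, cvx_mid_left hb ha hord, cvx_mid_right hb ha hord, rfl⟩
  have hub : ∀ r ∈ {r : ℝ | ∃ μ : Measure ℝ, IsP1 μ ∧ CvxOrder μb μ ∧
      CvxOrder μ μa ∧ r = ∫ x, h x ∂μ}, r ≤ (∫ x, h x ∂μm) + V * s₀ := by
    rintro r ⟨μ, hμ, h1, h2, rfl⟩
    exact hmain μ hμ h1 h2
  have hbddS : BddAbove {r : ℝ | ∃ μ : Measure ℝ, IsP1 μ ∧ CvxOrder μb μ ∧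
      CvxOrder μ μa ∧ r = ∫ x, h x ∂μ} := ⟨_, hub⟩
  have hPval_ge : (∫ x, h x ∂μm) ≤ Pval μb μa h := le_csSup hbddS hmem
  have hPval_le : Pval μb μa h ≤ (∫ x, h x ∂μm) + V * s₀ := csSup_le ⟨_, hmem⟩ hub
  constructor
  · linarith
  · have hsqrt : s₀ = Real.sqrt (2 * M) * Real.sqrt δ := by
      rw [hs₀def, Real.sqrt_mul (by positivity : (0:ℝ) ≤ 2 * M) δ]
    calc Pval μb μa h - ∫ x, h x ∂μm ≤ V * s₀ := by linarith
      _ = Real.sqrt (2 * M) * V * Real.sqrt δ := by rw [hsqrt]; ring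
end
end
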